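/- arXiv:1304.7750 — 3 statements merged into one kernel-verified Lean document; each statement's English description precedes it below -/
import Mathlib

section
/- Let (a,b,c) be a triple of positive real numbers with a < b < c and b − a < c₀ < a, where c₀ := c − ⌊c/b⌋·b. Then: (i) S_{a,b,c} satisfies R_{a,b,c}(S_{a,b,c}) ⊆ S_{a,b,c} and R̃_{a,b,c}(S_{a,b,c}) ⊆ S_{a,b,c} and is disjoint from the black holes [c₀+a−b, c₀) + aℤ and [c−c₀, c+b−c₀−a) + aℤ, and S_{a,b,c} is maximal with these properties: every set E ⊆ ℝ with R_{a,b,c}(E) ⊆ E, R̃_{a,b,c}(E) ⊆ E, and E ∩ (([c₀+a−b, c₀) ∪ [c−c₀, c+b−c₀−a)) + aℤ) = ∅ satisfies E ⊆ S_{a,b,c}. (ii) The complement ℝ∖S_{a,b,c} satisfies R_{a,b,c}(ℝ∖S_{a,b,c}) ⊆ ℝ∖S_{a,b,c} and R̃_{a,b,c}(ℝ∖S_{a,b,c}) ⊆ ℝ∖S_{a,b,c} and contains both black holes, and it is minimal with these properties: every set F ⊆ ℝ with R_{a,b,c}(F) ⊆ F, R̃_{a,b,c}(F) ⊆ F, and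 (([c₀+a−b, c₀) ∪ [c−c₀, c+b−c₀−a)) + aℤ) ⊆ F satisfies ℝ∖S_{a,b,c} ⊆ F. -/
open MeasureTheory Set

/- Indicator function of the interval `[0, c)`. -/
open Classical in
noncomputable def chiIco (c x : ℝ) : ℝ := if 0 ≤ x ∧ x < c then 1 else 0

/-- The row `μ = j·a` of the infinite matrix `M_{a,b,c}(t)` applied to the vector
`z : bℤ → ℝ` (indexed by `k : ℤ`, with `λ = k·b`):
`(M_{a,b,c}(t)z)(μ) = Σ_{λ∈bℤ} χ_{[0,c)}(t − μ + λ)·z(λ)`. -/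
noncomputable def Mrow (a b c t : ℝ) (z : ℤ → ℝ) (j : ℤ) : ℝ :=
  ∑' k : ℤ, chiIco c (t - (j : ℝ) * a + (k : ℝ) * b) * z k

/-- `D_{a,b,c} = {t : M_{a,b,c}(t)x = 2 for some binary x with x(0) = 1}`. -/
def Dset (a b c : ℝ) : Set ℝ :=
  {t : ℝ | ∃ x : ℤ → ℝ, (∀ k, x k = 0 ∨ x k = 1) ∧ x 0 = 1 ∧ ∀ j : ℤ, Mrow a b c t x j = 2}

/-- `S_{a,b,c} = {t : M_{a,b,c}(t)x = 1 for some binary x with x(0) = 1}`. -/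
def Sset (a b c : ℝ) : Set ℝ :=
  {t : ℝ | ∃ x : ℤ → ℝ, (∀ k, x k = 0 ∨ x k = 1) ∧ x 0 = 1 ∧ ∀ j : ℤ, Mrow a b c t x j = 1}

/-- The periodic set `X + aℤ = {x + ka : x ∈ X, k ∈ ℤ}`. -/
def perSet (a : ℝ) (X : Set ℝ) : Set ℝ := {t : ℝ | ∃ k : ℤ, t - (k : ℝ) * a ∈ X}

/- The piecewise linear transformation `R_{a,b,c}`. -/
open Classical in
noncomputable def Rmap (a b c : ℝ) (t : ℝ) : ℝ :=
  if t ∈ perSet a (Set.Ico 0 ((c - (⌊c / b⌋ : ℝ) * b) + a - b)) then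
    t + (⌊c / b⌋ : ℝ) * b + b
  else if t ∈ perSet a (Set.Ico ((c - (⌊c / b⌋ : ℝ) * b) + a - b) (c - (⌊c / b⌋ : ℝ) * b)) then
    t
  else t + (⌊c / b⌋ : ℝ) * b

/- The piecewise linear transformation `R̃_{a,b,c}`. -/
open Classical in
noncomputable def Rtil (a b c : ℝ) (t : ℝ) : ℝ :=
  if t ∈ perSet a (Set.Ico (c - a) (c - (c - (⌊c / b⌋ : ℝ) * b))) then
    t - (⌊c / b⌋ : ℝ) * b
  else if t ∈ perSet a
      (Set.Ico (c - (c - (⌊c / b⌋ : ℝ) * b)) (c + b - (c - (⌊c / b⌋ : ℝ) * b) - a)) then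
    t
  else t - (⌊c / b⌋ : ℝ) * b - b

/-- Context hypotheses for the `b - a < c₀ < a` regime. -/
structure Good (a b c c₀ : ℝ) : Prop where
  ha : 0 < a
  hab : a < b
  hbc : b < c
  hc0 : c₀ = c - (⌊c / b⌋ : ℝ) * b
  h1 : b - a < c₀
  h2 : c₀ < a

namespace Good

variable {a b c c₀ : ℝ}

lemma hb (H : Good a b c c₀) : 0 < b := H.ha.trans H.hab
lemma hc (H : Good a b c c₀) : 0 < c := H.hb.trans H.hbc
lemma hq1 (H : Good a b c c₀) : (1 : ℤ) ≤ ⌊c / b⌋ := by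
  rw [Int.le_floor]
  exact_mod_cast (one_le_div H.hb).2 H.hbc.le
lemma hqb (H : Good a b c c₀) : (⌊c / b⌋ : ℝ) * b = c - c₀ := by rw [H.hc0]; ring
lemma hqb_le (H : Good a b c c₀) : b ≤ (⌊c / b⌋ : ℝ) * b := by
  nlinarith [H.hb, (by exact_mod_cast H.hq1 : (1:ℝ) ≤ (⌊c / b⌋ : ℝ))]
lemma hc0pos (H : Good a b c c₀) : 0 < c₀ := by nlinarith [H.h1, H.hab]
lemma hc0b (H : Good a b c c₀) : c₀ < b := H.h2.trans H.hab

end Good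

noncomputable def sphase (a t : ℝ) : ℝ := t - a * ⌊t / a⌋

noncomputable def uphase (a c t : ℝ) : ℝ := t - a * ⌊(t - (c - a)) / a⌋

lemma sphase_nonneg {a : ℝ} (ha : 0 < a) (t : ℝ) : 0 ≤ sphase a t := by
  have := Int.floor_le (t / a)
  have h2 : a * (⌊t / a⌋ : ℝ) ≤ a * (t / a) := by
    exact mul_le_mul_of_nonneg_left this ha.le
  rw [mul_div_cancel₀ _ ha.ne'] at h2
  simp only [sphase]; linarith

lemma sphase_lt {a : ℝ} (ha : 0 < a) (t : ℝ) : sphase a t < a := by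
  have := Int.lt_floor_add_one (t / a)
  have h2 : a * (t / a) < a * ((⌊t / a⌋ : ℝ) + 1) := by
    exact mul_lt_mul_of_pos_left this ha
  rw [mul_div_cancel₀ _ ha.ne'] at h2
  simp only [sphase]; linarith

lemma sphase_eq {a : ℝ} (ha : 0 < a) {t : ℝ} (k : ℤ) (h0 : 0 ≤ t - (k : ℝ) * a)
    (h1 : t - (k : ℝ) * a < a) : sphase a t = t - (k : ℝ) * a := by
  have hf : ⌊t / a⌋ = k := by
    rw [Int.floor_eq_iff]
    constructor
    · rw [le_div_iff₀ ha]; linarith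
    · rw [div_lt_iff₀ ha]; push_cast; linarith
  simp only [sphase, hf]; ring

lemma uphase_eq {a c : ℝ} (ha : 0 < a) {t : ℝ} (k : ℤ) (h0 : c - a ≤ t - (k : ℝ) * a)
    (h1 : t - (k : ℝ) * a < c) : uphase a c t = t - (k : ℝ) * a := by
  have hf : ⌊(t - (c - a)) / a⌋ = k := by
    rw [Int.floor_eq_iff]
    constructor
    · rw [le_div_iff₀ ha]; linarith
    · rw [div_lt_iff₀ ha]; push_cast; linarith
  simp only [uphase, hf]; ring

lemma uphase_mem {a c : ℝ} (ha : 0 < a) (t : ℝ) :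
    c - a ≤ uphase a c t ∧ uphase a c t < c := by
  have h1 := sphase_nonneg ha (t - (c - a))
  have h2 := sphase_lt ha (t - (c - a))
  have : uphase a c t = sphase a (t - (c - a)) + (c - a) := by
    simp only [uphase, sphase]; ring
  constructor <;> linarith [this]

/-- Membership in a periodic set in terms of the phase. -/
lemma mem_perSet_iff_s {a : ℝ} (ha : 0 < a) {x y t : ℝ} (hx : 0 ≤ x) (hy : y ≤ a) :
    t ∈ perSet a (Set.Ico x y) ↔ sphase a t ∈ Set.Ico x y := by
  constructor
  · rintro ⟨k, hk1, hk2⟩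
    rw [sphase_eq ha k (le_trans hx hk1) (lt_of_lt_of_le hk2 hy)]
    exact ⟨hk1, hk2⟩
  · intro h
    exact ⟨⌊t / a⌋, by simpa [sphase, mul_comm] using h.1, by simpa [sphase, mul_comm] using h.2⟩

lemma mem_perSet_iff_u {a c : ℝ} (ha : 0 < a) {x y t : ℝ} (hx : c - a ≤ x) (hy : y ≤ c) :
    t ∈ perSet a (Set.Ico x y) ↔ uphase a c t ∈ Set.Ico x y := by
  constructor
  · rintro ⟨k, hk1, hk2⟩
    rw [uphase_eq ha k (le_trans hx hk1) (lt_of_lt_of_le hk2 hy)]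
    exact ⟨hk1, hk2⟩
  · intro h
    refine ⟨⌊(t - (c - a)) / a⌋, ?_, ?_⟩
    · simpa [uphase, mul_comm] using h.1
    · simpa [uphase, mul_comm] using h.2
section Branches

variable {a b c c₀ : ℝ}

lemma Rmap_eq1 (H : Good a b c c₀) {t : ℝ} (h : sphase a t ∈ Set.Ico 0 (c₀ + a - b)) :
    Rmap a b c t = t + (⌊c / b⌋ : ℝ) * b + b := by
  have hmem : t ∈ perSet a (Set.Ico 0 ((c - (⌊c / b⌋ : ℝ) * b) + a - b)) := by
    rw [← H.hc0, mem_perSet_iff_s H.ha le_rfl (by linarith [H.hc0b])]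
    exact h
  simp only [Rmap, if_pos hmem]

lemma Rmap_eq2 (H : Good a b c c₀) {t : ℝ} (h : sphase a t ∈ Set.Ico (c₀ + a - b) c₀) :
    Rmap a b c t = t := by
  have h1 : t ∉ perSet a (Set.Ico 0 ((c - (⌊c / b⌋ : ℝ) * b) + a - b)) := by
    rw [← H.hc0, mem_perSet_iff_s H.ha le_rfl (by linarith [H.hc0b])]
    intro hc; exact absurd hc.2 (not_lt.2 h.1)
  have h2 : t ∈ perSet a (Set.Ico ((c - (⌊c / b⌋ : ℝ) * b) + a - b) (c - (⌊c / b⌋ : ℝ) * b)) := by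
    rw [← H.hc0, mem_perSet_iff_s H.ha (by linarith [H.h1]) (by linarith [H.h2])]
    exact h
  simp only [Rmap, if_neg h1, if_pos h2]

lemma Rmap_eq3 (H : Good a b c c₀) {t : ℝ} (h : sphase a t ∈ Set.Ico c₀ a) :
    Rmap a b c t = t + (⌊c / b⌋ : ℝ) * b := by
  have h1 : t ∉ perSet a (Set.Ico 0 ((c - (⌊c / b⌋ : ℝ) * b) + a - b)) := by
    rw [← H.hc0, mem_perSet_iff_s H.ha le_rfl (by linarith [H.hc0b])]
    intro hc; have := hc.2; have := h.1; have := H.hab; linarith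
  have h2 : t ∉ perSet a (Set.Ico ((c - (⌊c / b⌋ : ℝ) * b) + a - b) (c - (⌊c / b⌋ : ℝ) * b)) := by
    rw [← H.hc0, mem_perSet_iff_s H.ha (by linarith [H.h1]) (by linarith [H.h2])]
    intro hc; exact absurd hc.2 (not_lt.2 h.1)
  simp only [Rmap, if_neg h1, if_neg h2]

lemma Rtil_eq1 (H : Good a b c c₀) {t : ℝ} (h : uphase a c t ∈ Set.Ico (c - a) (c - c₀)) :
    Rtil a b c t = t - (⌊c / b⌋ : ℝ) * b := by
  have hmem : t ∈ perSet a (Set.Ico (c - a) (c - (c - (⌊c / b⌋ : ℝ) * b))) := by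
    rw [← H.hc0, mem_perSet_iff_u H.ha le_rfl (by linarith [H.hc0pos])]
    exact h
  simp only [Rtil, if_pos hmem]

lemma Rtil_eq2 (H : Good a b c c₀) {t : ℝ}
    (h : uphase a c t ∈ Set.Ico (c - c₀) (c + b - c₀ - a)) : Rtil a b c t = t := by
  have h1 : t ∉ perSet a (Set.Ico (c - a) (c - (c - (⌊c / b⌋ : ℝ) * b))) := by
    rw [← H.hc0, mem_perSet_iff_u H.ha le_rfl (by linarith [H.hc0pos])]
    intro hc; exact absurd hc.2 (not_lt.2 h.1)
  have h2 : t ∈ perSet a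
      (Set.Ico (c - (c - (⌊c / b⌋ : ℝ) * b)) (c + b - (c - (⌊c / b⌋ : ℝ) * b) - a)) := by
    rw [← H.hc0, mem_perSet_iff_u H.ha (show c - a ≤ c - c₀ by linarith [H.h2])
      (show c + b - c₀ - a ≤ c by linarith [H.h1])]
    exact h
  simp only [Rtil, if_neg h1, if_pos h2]

lemma Rtil_eq3 (H : Good a b c c₀) {t : ℝ}
    (h : uphase a c t ∈ Set.Ico (c + b - c₀ - a) c) :
    Rtil a b c t = t - (⌊c / b⌋ : ℝ) * b - b := by
  have h1 : t ∉ perSet a (Set.Ico (c - a) (c - (c - (⌊c / b⌋ : ℝ) * b))) := by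
    rw [← H.hc0, mem_perSet_iff_u H.ha le_rfl (by linarith [H.hc0pos])]
    intro hc; have := hc.2; have := h.1; have := H.hab; linarith
  have h2 : t ∉ perSet a
      (Set.Ico (c - (c - (⌊c / b⌋ : ℝ) * b)) (c + b - (c - (⌊c / b⌋ : ℝ) * b) - a)) := by
    rw [← H.hc0, mem_perSet_iff_u H.ha (show c - a ≤ c - c₀ by linarith [H.h2])
      (show c + b - c₀ - a ≤ c by linarith [H.h1])]
    intro hc; exact absurd hc.2 (not_lt.2 h.1)
  simp only [Rtil, if_neg h1, if_neg h2]

end Branches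
section Rows

open Classical in
lemma term_eq {c : ℝ} {x : ℤ → ℝ} (hx : ∀ k, x k = 0 ∨ x k = 1) (v : ℝ) (k : ℤ) :
    chiIco c v * x k = if (0 ≤ v ∧ v < c) ∧ x k = 1 then 1 else 0 := by
  rcases hx k with h | h <;> by_cases hv : 0 ≤ v ∧ v < c <;> simp [chiIco, h, hv]

lemma Mrow_eq_one_iff {a b c t : ℝ} {x : ℤ → ℝ} (hx : ∀ k, x k = 0 ∨ x k = 1) (j : ℤ) :
    Mrow a b c t x j = 1 ↔
      ∃! k : ℤ, (0 ≤ t - (j : ℝ) * a + (k : ℝ) * b ∧ t - (j : ℝ) * a + (k : ℝ) * b < c)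
        ∧ x k = 1 := by
  classical
  set f : ℤ → ℝ := fun k => chiIco c (t - (j : ℝ) * a + (k : ℝ) * b) * x k with hf
  have hfe : ∀ k, f k = if (0 ≤ t - (j : ℝ) * a + (k : ℝ) * b ∧
      t - (j : ℝ) * a + (k : ℝ) * b < c) ∧ x k = 1 then 1 else 0 :=
    fun k => term_eq hx _ k
  have hM : Mrow a b c t x j = ∑' k, f k := rfl
  constructor
  · intro h
    have hsum : Summable f := by
      by_contra hns
      rw [hM, tsum_eq_zero_of_not_summable hns] at h
      norm_num at h
    have hex : ∃ k : ℤ, ((0 ≤ t - (j : ℝ) * a + (k : ℝ) * b ∧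
        t - (j : ℝ) * a + (k : ℝ) * b < c) ∧ x k = 1) := by
      by_contra hne
      push_neg at hne
      have hz : f = fun _ => 0 := by
        funext k; rw [hfe k, if_neg]
        intro hcond; exact (hne k hcond.1 hcond.2).elim
      rw [hM, hz, tsum_zero] at h
      norm_num at h
    obtain ⟨k0, hk0⟩ := hex
    refine ⟨k0, hk0, ?_⟩
    intro k1 hk1
    by_contra hne
    have hmono := Summable.sum_le_tsum ({k0, k1} : Finset ℤ)
      (fun k _ => by rw [hfe k]; positivity) hsum
    rw [← hM, h] at hmono
    rw [Finset.sum_pair (fun hh => hne (hh.symm)) ] at hmono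
    rw [hfe k0, hfe k1, if_pos hk0, if_pos hk1] at hmono
    norm_num at hmono
  · rintro ⟨k0, hk0, huniq⟩
    rw [hM, tsum_eq_single k0]
    · rw [hfe k0, if_pos hk0]
    · intro k hk
      rw [hfe k, if_neg]
      intro hcond
      exact hk (huniq k hcond)

lemma Mrow_shift {a b c t : ℝ} (x : ℤ → ℝ) (m : ℤ) (j : ℤ) :
    Mrow a b c (t + (m : ℝ) * b) (fun k => x (k + m)) j = Mrow a b c t x j := by
  unfold Mrow
  have := (Equiv.addRight m).tsum_eq (f := fun k : ℤ => chiIco c (t - (j : ℝ) * a + (k : ℝ) * b) * x k)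
  rw [← this]
  congr 1
  funext k
  simp only [Equiv.coe_addRight]
  congr 2
  push_cast
  ring

lemma Sset_shift {a b c t : ℝ} {x : ℤ → ℝ} (m : ℤ) (hx : ∀ k, x k = 0 ∨ x k = 1)
    (hm : x m = 1) (hr : ∀ j : ℤ, Mrow a b c t x j = 1) : t + (m : ℝ) * b ∈ Sset a b c := by
  refine ⟨fun k => x (k + m), fun k => hx _, by simpa using hm, fun j => ?_⟩
  rw [Mrow_shift x m j]
  exact hr j

end Rows
section Jump

variable {a b c c₀ : ℝ}

lemma forward_step (H : Good a b c c₀) {t : ℝ} (ht : t ∈ Sset a b c) :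
    sphase a t ∉ Set.Ico (c₀ + a - b) c₀ ∧ Rmap a b c t ∈ Sset a b c := by
  obtain ⟨x, hbin, hx0, hrow⟩ := ht
  set j0 : ℤ := ⌊t / a⌋ with hj0
  set s : ℝ := sphase a t with hs
  have hsval : t - (j0 : ℝ) * a = s := by simp [hs, sphase, hj0]; ring
  have hs0 : 0 ≤ s := sphase_nonneg H.ha t
  have hsa : s < a := sphase_lt H.ha t
  set Q : ℝ := (⌊c / b⌋ : ℝ) with hQ
  have hQb : Q * b = c - c₀ := H.hqb
  obtain ⟨k0', hk0', huniq0⟩ := (Mrow_eq_one_iff hbin j0).1 (hrow j0)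
  have hcond0 : (0 ≤ t - (j0 : ℝ) * a + ((0 : ℤ) : ℝ) * b ∧
      t - (j0 : ℝ) * a + ((0 : ℤ) : ℝ) * b < c) ∧ x 0 = 1 := by
    push_cast
    constructor
    · constructor <;> [linarith [hsval.ge, hsval.le]; linarith [hsval.le, H.hab, H.hbc]]
    · exact hx0
  have hk0'0 : k0' = 0 := (huniq0 0 hcond0).symm
  obtain ⟨k1, ⟨⟨h1a, h1b⟩, h1x⟩, -⟩ := (Mrow_eq_one_iff hbin (j0 + 1)).1 (hrow (j0 + 1))
  have hcast : t - ((j0 + 1 : ℤ) : ℝ) * a = s - a := by push_cast; linarith [hsval]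
  rw [hcast] at h1a h1b
  have hk1ne : k1 ≠ 0 := by
    intro h
    rw [h] at h1a
    push_cast at h1a
    linarith
  have hnot : ¬ (0 ≤ s + (k1 : ℝ) * b ∧ s + (k1 : ℝ) * b < c) := by
    intro hcc
    apply hk1ne
    rw [huniq0 k1 ⟨⟨by rw [hsval]; exact hcc.1, by rw [hsval]; exact hcc.2⟩, h1x⟩, hk0'0]
  have hclb : c ≤ s + (k1 : ℝ) * b := by
    by_contra hlt
    exact hnot ⟨by linarith, by linarith⟩
  have hcub : s + (k1 : ℝ) * b < c + a := by linarith
  -- bounds on k1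
  have hk1lb : (⌊c / b⌋ : ℤ) ≤ k1 := by
    have hr : (Q - 1) * b < (k1 : ℝ) * b := by linarith [H.hc0pos, H.hab, hsa, hclb, hQb]
    have := lt_of_mul_lt_mul_right hr H.hb.le
    have : ((⌊c / b⌋ - 1 : ℤ) : ℝ) < (k1 : ℝ) := by push_cast; linarith [this]
    have h' : (⌊c / b⌋ : ℤ) - 1 < k1 := by exact_mod_cast this
    omega
  have hk1ub : k1 ≤ (⌊c / b⌋ : ℤ) + 1 := by
    have hr : (k1 : ℝ) * b < (Q + 2) * b := by linarith [H.hc0b, H.hab, hs0, hcub, hQb]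
    have := lt_of_mul_lt_mul_right hr H.hb.le
    have : (k1 : ℝ) < ((⌊c / b⌋ + 2 : ℤ) : ℝ) := by push_cast; linarith [this]
    have h' : k1 < (⌊c / b⌋ : ℤ) + 2 := by exact_mod_cast this
    omega
  have hcases : k1 = ⌊c / b⌋ ∨ k1 = ⌊c / b⌋ + 1 := by omega
  -- consequences in the two cases
  have main : (c₀ ≤ s ∧ x ⌊c / b⌋ = 1) ∨ (s < c₀ + a - b ∧ x (⌊c / b⌋ + 1) = 1) := by
    rcases hcases with h | h
    · left
      constructor
      · have : (k1 : ℝ) = Q := by rw [h, hQ]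
        rw [this] at hclb
        linarith [hQb, hclb]
      · rw [← h]; exact h1x
    · right
      constructor
      · have : (k1 : ℝ) = Q + 1 := by rw [h]; push_cast; rfl
        rw [this] at h1b
        linarith [hQb, h1b]
      · rw [← h]; exact h1x
  constructor
  · intro hmid
    rcases main with ⟨hge, -⟩ | ⟨hlt, -⟩
    · exact absurd hmid.2 (not_lt.2 hge)
    · exact absurd hmid.1 (not_le.2 (by linarith [hlt, H.hab]))
  · rcases main with ⟨hge, hxq⟩ | ⟨hlt, hxq⟩
    · rw [Rmap_eq3 H ⟨hge, hsa⟩]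
      exact Sset_shift ⌊c / b⌋ hbin hxq hrow
    · rw [Rmap_eq1 H ⟨hs0, hlt⟩]
      have := Sset_shift (⌊c / b⌋ + 1) hbin hxq hrow
      have hcc : t + ((⌊c / b⌋ + 1 : ℤ) : ℝ) * b = t + (⌊c / b⌋ : ℝ) * b + b := by
        push_cast; ring
      rwa [hcc] at this

lemma backward_step (H : Good a b c c₀) {t : ℝ} (ht : t ∈ Sset a b c) :
    uphase a c t ∉ Set.Ico (c - c₀) (c + b - c₀ - a) ∧ Rtil a b c t ∈ Sset a b c := by
  obtain ⟨x, hbin, hx0, hrow⟩ := ht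
  set j1 : ℤ := ⌊(t - c) / a⌋ + 1 with hj1
  have hfl := Int.floor_le ((t - c) / a)
  have hfu := Int.lt_floor_add_one ((t - c) / a)
  have hl : c - a ≤ t - (j1 : ℝ) * a := by
    have := mul_le_mul_of_nonneg_left hfl H.ha.le
    rw [mul_div_cancel₀ _ H.ha.ne'] at this
    push_cast [hj1]; linarith [this]
  have hu : t - (j1 : ℝ) * a < c := by
    have := mul_lt_mul_of_pos_left hfu H.ha
    rw [mul_div_cancel₀ _ H.ha.ne'] at this
    push_cast [hj1]; linarith [this]
  set u : ℝ := uphase a c t with hud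
  have huval : t - (j1 : ℝ) * a = u := by rw [hud, uphase_eq H.ha j1 hl hu]
  rw [huval] at hl hu
  set Q : ℝ := (⌊c / b⌋ : ℝ) with hQ
  have hQb : Q * b = c - c₀ := H.hqb
  obtain ⟨k0', hk0', huniq0⟩ := (Mrow_eq_one_iff hbin j1).1 (hrow j1)
  have hcond0 : (0 ≤ t - (j1 : ℝ) * a + ((0 : ℤ) : ℝ) * b ∧
      t - (j1 : ℝ) * a + ((0 : ℤ) : ℝ) * b < c) ∧ x 0 = 1 := by
    push_cast
    rw [huval]
    exact ⟨⟨by linarith [H.hab, H.hbc], by linarith⟩, hx0⟩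
  have hk0'0 : k0' = 0 := (huniq0 0 hcond0).symm
  obtain ⟨k2, ⟨⟨h2a, h2b⟩, h2x⟩, -⟩ := (Mrow_eq_one_iff hbin (j1 - 1)).1 (hrow (j1 - 1))
  have hcast : t - ((j1 - 1 : ℤ) : ℝ) * a = u + a := by push_cast; linarith [huval]
  rw [hcast] at h2a h2b
  have hk2ne : k2 ≠ 0 := by
    intro h
    rw [h] at h2b
    push_cast at h2b
    linarith
  have hnot : ¬ (0 ≤ u + (k2 : ℝ) * b ∧ u + (k2 : ℝ) * b < c) := by
    intro hcc
    apply hk2ne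
    rw [huniq0 k2 ⟨⟨by rw [huval]; exact hcc.1, by rw [huval]; exact hcc.2⟩, h2x⟩, hk0'0]
  have hneg : u + (k2 : ℝ) * b < 0 := by
    by_contra hge
    exact hnot ⟨by linarith, by linarith⟩
  -- bounds on k2
  have hk2ub : k2 ≤ -⌊c / b⌋ := by
    have hr : (Q - 1) * b < (-k2 : ℤ) * b := by
      push_cast
      linarith [H.hc0pos, H.hab, hl, hneg, hQb]
    have := lt_of_mul_lt_mul_right hr H.hb.le
    have : ((⌊c / b⌋ - 1 : ℤ) : ℝ) < ((-k2 : ℤ) : ℝ) := by push_cast; push_cast at this; linarith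
    have h' : (⌊c / b⌋ : ℤ) - 1 < -k2 := by exact_mod_cast this
    omega
  have hk2lb : -(⌊c / b⌋ + 1) ≤ k2 := by
    have hr : ((-k2 : ℤ) : ℝ) * b < (Q + 2) * b := by
      push_cast
      linarith [H.hc0b, H.hab, hu, h2a, hQb]
    have := lt_of_mul_lt_mul_right hr H.hb.le
    have : ((-k2 : ℤ) : ℝ) < ((⌊c / b⌋ + 2 : ℤ) : ℝ) := by push_cast; push_cast at this; linarith
    have h' : -k2 < (⌊c / b⌋ : ℤ) + 2 := by exact_mod_cast this
    omega
  have hcases : k2 = -⌊c / b⌋ ∨ k2 = -(⌊c / b⌋ + 1) := by omega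
  have main : (u < c - c₀ ∧ x (-⌊c / b⌋) = 1) ∨
      (c + b - c₀ - a ≤ u ∧ x (-(⌊c / b⌋ + 1)) = 1) := by
    rcases hcases with h | h
    · left
      constructor
      · have : (k2 : ℝ) = -Q := by rw [h]; push_cast; rfl
        rw [this] at hneg
        linarith [hQb]
      · rw [← h]; exact h2x
    · right
      constructor
      · have : (k2 : ℝ) = -(Q + 1) := by rw [h]; push_cast; rfl
        rw [this] at h2a
        linarith [hQb]
      · rw [← h]; exact h2x
  constructor
  · intro hmid
    rcases main with ⟨hlt, -⟩ | ⟨hge, -⟩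
    · exact absurd hmid.1 (not_le.2 hlt)
    · exact absurd hmid.2 (not_lt.2 hge)
  · rcases main with ⟨hlt, hxq⟩ | ⟨hge, hxq⟩
    · rw [Rtil_eq1 H ⟨hl, hlt⟩]
      have := Sset_shift (-⌊c / b⌋) hbin hxq hrow
      have hcc : t + ((-⌊c / b⌋ : ℤ) : ℝ) * b = t - (⌊c / b⌋ : ℝ) * b := by push_cast; ring
      rwa [hcc] at this
    · rw [Rtil_eq3 H ⟨hge, hu⟩]
      have := Sset_shift (-(⌊c / b⌋ + 1)) hbin hxq hrow
      have hcc : t + ((-(⌊c / b⌋ + 1) : ℤ) : ℝ) * b = t - (⌊c / b⌋ : ℝ) * b - b := by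
        push_cast; ring
      rwa [hcc] at this

end Jump
section Inv

variable {a b c c₀ : ℝ}

lemma sphase_repr (a t : ℝ) : ∃ k : ℤ, sphase a t = t - (k : ℝ) * a :=
  ⟨⌊t / a⌋, by simp [sphase]; ring⟩

lemma uphase_repr (a c t : ℝ) : ∃ k : ℤ, uphase a c t = t - (k : ℝ) * a :=
  ⟨⌊(t - (c - a)) / a⌋, by simp [uphase]; ring⟩

lemma inv1 (H : Good a b c c₀) {t : ℝ} (h : sphase a t ∉ Set.Ico (c₀ + a - b) c₀) :
    Rtil a b c (Rmap a b c t) = t := by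
  obtain ⟨k, hk⟩ := sphase_repr a t
  set s : ℝ := sphase a t with hsd
  have hs0 : 0 ≤ s := sphase_nonneg H.ha t
  have hsa : s < a := sphase_lt H.ha t
  have hQb : (⌊c / b⌋ : ℝ) * b = c - c₀ := H.hqb
  rcases lt_or_ge s (c₀ + a - b) with h1 | h1
  · -- first branch
    have hR : Rmap a b c t = t + (⌊c / b⌋ : ℝ) * b + b := Rmap_eq1 H ⟨hs0, h1⟩
    have hup : uphase a c (t + (⌊c / b⌋ : ℝ) * b + b) = s + c - c₀ + b - a := by
      rw [uphase_eq H.ha (k + 1) (by push_cast; linarith [hk, hQb, H.hc0b, H.hc0pos, H.h1, H.h2, H.hab, hs0, hsa, h1]) (by push_cast; linarith [hk, hQb, H.hc0b, H.hc0pos, H.h1, H.h2, H.hab, hs0, hsa, h1])]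
      push_cast; linarith [hk, hQb, H.hc0b, H.hc0pos, H.h1, H.h2, H.hab, hs0, hsa, h1]
    rw [hR, Rtil_eq3 H (by rw [hup]; exact ⟨by linarith, by linarith⟩)]
    ring
  · have h2 : c₀ ≤ s := by
      by_contra hlt
      exact h ⟨h1, not_le.1 hlt⟩
    have hR : Rmap a b c t = t + (⌊c / b⌋ : ℝ) * b := Rmap_eq3 H ⟨h2, hsa⟩
    have hup : uphase a c (t + (⌊c / b⌋ : ℝ) * b) = s + c - c₀ - a := by
      rw [uphase_eq H.ha (k + 1) (by push_cast; linarith [hk, hQb, H.hc0b, H.hc0pos, H.h1, H.h2, H.hab, hs0, hsa, h1, h2]) (by push_cast; linarith [hk, hQb, H.hc0b, H.hc0pos, H.h1, H.h2, H.hab, hs0, hsa, h1, h2])]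
      push_cast; linarith [hk, hQb, H.hc0b, H.hc0pos, H.h1, H.h2, H.hab, hs0, hsa, h1, h2]
    rw [hR, Rtil_eq1 H (by rw [hup]; exact ⟨by linarith, by linarith⟩)]
    ring

lemma inv2 (H : Good a b c c₀) {t : ℝ}
    (h : uphase a c t ∉ Set.Ico (c - c₀) (c + b - c₀ - a)) :
    Rmap a b c (Rtil a b c t) = t := by
  obtain ⟨k, hk⟩ := uphase_repr a c t
  set u : ℝ := uphase a c t with hud
  have hl : c - a ≤ u := (uphase_mem H.ha t).1
  have hu : u < c := (uphase_mem H.ha t).2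
  have hQb : (⌊c / b⌋ : ℝ) * b = c - c₀ := H.hqb
  rcases lt_or_ge u (c - c₀) with h1 | h1
  · have hR : Rtil a b c t = t - (⌊c / b⌋ : ℝ) * b := Rtil_eq1 H ⟨hl, h1⟩
    have hsp : sphase a (t - (⌊c / b⌋ : ℝ) * b) = u - c + c₀ + a := by
      rw [sphase_eq H.ha (k - 1) (by push_cast; linarith [hk, hQb, H.hc0b, H.hc0pos, H.h1, H.h2, H.hab, hl, hu, h1]) (by push_cast; linarith [hk, hQb, H.hc0b, H.hc0pos, H.h1, H.h2, H.hab, hl, hu, h1])]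
      push_cast; linarith [hk, hQb, H.hc0b, H.hc0pos, H.h1, H.h2, H.hab, hl, hu, h1]
    rw [hR, Rmap_eq3 H (by rw [hsp]; exact ⟨by linarith, by linarith⟩)]
    ring
  · have h2 : c + b - c₀ - a ≤ u := by
      by_contra hlt
      exact h ⟨h1, not_le.1 hlt⟩
    have hR : Rtil a b c t = t - (⌊c / b⌋ : ℝ) * b - b := Rtil_eq3 H ⟨h2, hu⟩
    have hsp : sphase a (t - (⌊c / b⌋ : ℝ) * b - b) = u - c + c₀ - b + a := by
      rw [sphase_eq H.ha (k - 1) (by push_cast; linarith [hk, hQb, H.hc0b, H.hc0pos, H.h1, H.h2, H.hab, hl, hu, h1, h2]) (by push_cast; linarith [hk, hQb, H.hc0b, H.hc0pos, H.h1, H.h2, H.hab, hl, hu, h1, h2])]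
      push_cast; linarith [hk, hQb, H.hc0b, H.hc0pos, H.h1, H.h2, H.hab, hl, hu, h1, h2]
    rw [hR, Rmap_eq1 H (by rw [hsp]; exact ⟨by linarith, by linarith⟩)]
    ring

end Inv
section Orbit

variable {a b c c₀ : ℝ}

lemma floor_eq_of {a : ℝ} (ha : 0 < a) (k : ℤ) {w : ℝ} (h0 : 0 ≤ w - (k : ℝ) * a)
    (h1 : w - (k : ℝ) * a < a) : ⌊w / a⌋ = k := by
  rw [Int.floor_eq_iff]
  constructor
  · rw [le_div_iff₀ ha]; linarith
  · rw [div_lt_iff₀ ha]; push_cast; linarith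

/-- The bi-infinite orbit of `t` under `Rmap` (forward) and `Rtil` (backward). -/
noncomputable def orb (a b c t : ℝ) (n : ℤ) : ℝ :=
  if 0 ≤ n then (Rmap a b c)^[n.toNat] t else (Rtil a b c)^[(-n).toNat] t

lemma orb_zero (a b c t : ℝ) : orb a b c t 0 = t := by simp [orb]

lemma orb_succ (a b c t : ℝ) {n : ℤ} (hn : 0 ≤ n) :
    orb a b c t (n + 1) = Rmap a b c (orb a b c t n) := by
  have h1 : (0:ℤ) ≤ n + 1 := by omega
  have h2 : (n + 1).toNat = n.toNat + 1 := by omega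
  simp only [orb, if_pos hn, if_pos h1, h2, Function.iterate_succ_apply']

lemma orb_pred (a b c t : ℝ) {n : ℤ} (hn : n ≤ 0) :
    orb a b c t (n - 1) = Rtil a b c (orb a b c t n) := by
  rcases eq_or_lt_of_le hn with h | h
  · subst h
    simp [orb, Function.iterate_succ_apply', show ((0:ℤ)-1) < 0 by omega,
      show (-((0:ℤ)-1)).toNat = 1 by rfl]
  · have h1 : ¬ (0:ℤ) ≤ n := by omega
    have h2 : ¬ (0:ℤ) ≤ n - 1 := by omega
    have h3 : (-(n - 1)).toNat = (-n).toNat + 1 := by omega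
    simp only [orb, if_neg h1, if_neg h2, h3, Function.iterate_succ_apply']

/-- `t` avoids both black holes along both orbits. -/
def Avoids (a b c c₀ t : ℝ) : Prop :=
  (∀ n : ℕ, sphase a ((Rmap a b c)^[n] t) ∉ Set.Ico (c₀ + a - b) c₀) ∧
  (∀ n : ℕ, uphase a c ((Rtil a b c)^[n] t) ∉ Set.Ico (c - c₀) (c + b - c₀ - a))

lemma avoid_s {t : ℝ} (hA : Avoids a b c c₀ t) {n : ℤ} (hn : 0 ≤ n) :
    sphase a (orb a b c t n) ∉ Set.Ico (c₀ + a - b) c₀ := by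
  simpa [orb, if_pos hn] using hA.1 n.toNat

lemma avoid_u {t : ℝ} (hA : Avoids a b c c₀ t) {n : ℤ} (hn : n ≤ 0) :
    uphase a c (orb a b c t n) ∉ Set.Ico (c - c₀) (c + b - c₀ - a) := by
  rcases eq_or_lt_of_le hn with h | h
  · subst h
    simpa [orb] using hA.2 0
  · have h1 : ¬ (0:ℤ) ≤ n := by omega
    simpa [orb, if_neg h1] using hA.2 (-n).toNat

/-- The key step lemma: increments and the floor identity along the orbit. -/
lemma orb_step (H : Good a b c c₀) {t : ℝ} (hA : Avoids a b c c₀ t) (n : ℤ) :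
    (orb a b c t (n + 1) = orb a b c t n + (⌊c / b⌋ : ℝ) * b ∨
      orb a b c t (n + 1) = orb a b c t n + (⌊c / b⌋ : ℝ) * b + b) ∧
    ⌊(orb a b c t (n + 1) - c) / a⌋ = ⌊orb a b c t n / a⌋ := by
  have hQb : (⌊c / b⌋ : ℝ) * b = c - c₀ := H.hqb
  rcases le_or_gt 0 n with hn | hn
  · -- forward step
    set v : ℝ := orb a b c t n with hv
    have hor : orb a b c t (n + 1) = Rmap a b c v := orb_succ a b c t hn
    have hmid := avoid_s hA hn
    rw [← hv] at hmid
    set s : ℝ := sphase a v with hsd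
    have hs0 : 0 ≤ s := sphase_nonneg H.ha v
    have hsa : s < a := sphase_lt H.ha v
    have hsv : s = v - a * (⌊v / a⌋ : ℝ) := rfl
    rcases lt_or_ge s (c₀ + a - b) with h1 | h1
    · have hR : Rmap a b c v = v + (⌊c / b⌋ : ℝ) * b + b := Rmap_eq1 H ⟨hs0, h1⟩
      refine ⟨Or.inr (by rw [hor, hR]), ?_⟩
      rw [hor, hR]
      apply floor_eq_of H.ha
      · push_cast
        linarith [hsv, hQb, H.hc0b]
      · push_cast
        linarith [hsv, hQb, h1]
    · have h2 : c₀ ≤ s := by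
        by_contra hlt
        exact hmid ⟨h1, not_le.1 hlt⟩
      have hR : Rmap a b c v = v + (⌊c / b⌋ : ℝ) * b := Rmap_eq3 H ⟨h2, hsa⟩
      refine ⟨Or.inl (by rw [hor, hR]), ?_⟩
      rw [hor, hR]
      apply floor_eq_of H.ha
      · push_cast
        linarith [hsv, hQb, h2]
      · push_cast
        linarith [hsv, hQb, hsa, H.hc0pos]
  · -- backward step
    have hn1 : n + 1 ≤ 0 := by omega
    set v : ℝ := orb a b c t (n + 1) with hv
    have hor : orb a b c t n = Rtil a b c v := by
      have := orb_pred a b c t hn1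
      simpa using this
    have hmid := avoid_u hA hn1
    rw [← hv] at hmid
    set u : ℝ := uphase a c v with hud
    have hl : c - a ≤ u := (uphase_mem H.ha v).1
    have hu : u < c := (uphase_mem H.ha v).2
    set k : ℤ := ⌊(v - (c - a)) / a⌋ with hkd
    have huv : u = v - a * (k : ℝ) := rfl
    have hfv : ⌊(v - c) / a⌋ = k - 1 := by
      apply floor_eq_of H.ha
      · push_cast; linarith [huv, hl]
      · push_cast; linarith [huv, hu]
    rcases lt_or_ge u (c - c₀) with h1 | h1
    · have hR : Rtil a b c v = v - (⌊c / b⌋ : ℝ) * b := Rtil_eq1 H ⟨hl, h1⟩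
      constructor
      · left; rw [hor, hR]; ring
      · rw [hor, hR, hfv]
        symm
        apply floor_eq_of H.ha
        · push_cast; linarith [huv, hQb, hl, H.hc0pos]
        · push_cast; linarith [huv, hQb, h1]
    · have h2 : c + b - c₀ - a ≤ u := by
        by_contra hlt
        exact hmid ⟨h1, not_le.1 hlt⟩
      have hR : Rtil a b c v = v - (⌊c / b⌋ : ℝ) * b - b := Rtil_eq3 H ⟨h2, hu⟩
      constructor
      · right; rw [hor, hR]; ring
      · rw [hor, hR, hfv]
        symm
        apply floor_eq_of H.ha
        · push_cast; linarith [huv, hQb, h2]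
        · push_cast; linarith [huv, hQb, hu, H.hc0b]

lemma orb_int (H : Good a b c c₀) {t : ℝ} (hA : Avoids a b c c₀ t) :
    ∀ n : ℤ, ∃ m : ℤ, orb a b c t n = t + (m : ℝ) * b := by
  intro n
  induction n using Int.induction_on with
  | zero => exact ⟨0, by simp [orb_zero]⟩
  | succ i ih =>
      obtain ⟨m, hm⟩ := ih
      rcases (orb_step H hA i).1 with h | h
      · exact ⟨m + ⌊c / b⌋, by rw [h, hm]; push_cast; ring⟩
      · exact ⟨m + ⌊c / b⌋ + 1, by rw [h, hm]; push_cast; ring⟩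
  | pred i ih =>
      obtain ⟨m, hm⟩ := ih
      rcases (orb_step H hA (-i - 1)).1 with h | h
      · refine ⟨m - ⌊c / b⌋, ?_⟩
        have : orb a b c t (-i - 1 + 1) = orb a b c t (-i) := by norm_num
        rw [this, hm] at h
        push_cast
        linarith [h]
      · refine ⟨m - ⌊c / b⌋ - 1, ?_⟩
        have : orb a b c t (-i - 1 + 1) = orb a b c t (-i) := by norm_num
        rw [this, hm] at h
        push_cast
        linarith [h]

lemma orb_mono (H : Good a b c c₀) {t : ℝ} (hA : Avoids a b c c₀ t) (n : ℤ) :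
    orb a b c t n + b ≤ orb a b c t (n + 1) := by
  rcases (orb_step H hA n).1 with h | h <;> rw [h] <;> linarith [H.hqb_le, H.hb]

lemma beta_strictMono (H : Good a b c c₀) {t : ℝ} (hA : Avoids a b c c₀ t) :
    StrictMono (fun n : ℤ => ⌊orb a b c t n / a⌋) := by
  apply strictMono_int_of_lt_succ
  intro n
  have h1 : ⌊orb a b c t n / a⌋ = ⌊(orb a b c t (n + 1) - c) / a⌋ := ((orb_step H hA n).2).symm
  have h2 : (orb a b c t (n + 1) - c) / a ≤ orb a b c t (n + 1) / a - 1 := by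
    rw [div_sub' H.ha.ne', div_le_div_iff₀ H.ha H.ha]
    nlinarith [H.hab, H.hbc, H.ha]
  calc ⌊orb a b c t n / a⌋ = ⌊(orb a b c t (n + 1) - c) / a⌋ := h1
    _ ≤ ⌊orb a b c t (n + 1) / a - 1⌋ := Int.floor_le_floor h2
    _ = ⌊orb a b c t (n + 1) / a⌋ - 1 := by
        rw [show (orb a b c t (n+1) / a - 1) = orb a b c t (n+1)/a - (1:ℤ) by push_cast; ring,
          Int.floor_sub_intCast]
    _ < ⌊orb a b c t (n + 1) / a⌋ := by omega

lemma beta_growth (H : Good a b c c₀) {t : ℝ} (hA : Avoids a b c c₀ t) (n m : ℤ)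
    (hnm : n ≤ m) : ⌊orb a b c t n / a⌋ + (m - n) ≤ ⌊orb a b c t m / a⌋ := by
  have hsm := beta_strictMono H hA
  have key : ∀ d : ℕ, ∀ n : ℤ, ⌊orb a b c t n / a⌋ + (d : ℤ) ≤ ⌊orb a b c t (n + d) / a⌋ := by
    intro d
    induction d with
    | zero => intro n; simp
    | succ d ih =>
        intro n
        have h1 := ih n
        have h2 : ⌊orb a b c t (n + d) / a⌋ < ⌊orb a b c t (n + d + 1) / a⌋ :=
          hsm (lt_add_one (n + (d : ℤ)))
        have h3 : (n + (d + 1 : ℕ) : ℤ) = n + d + 1 := by push_cast; ring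
        rw [h3]
        push_cast
        omega
  have h4 := key (m - n).toNat n
  have h5 : (n + ((m - n).toNat : ℤ)) = m := by omega
  rw [h5] at h4
  omega

/-- For every window index `j` there is a unique orbit point in window `j`. -/
lemma orb_window (H : Good a b c c₀) {t : ℝ} (hA : Avoids a b c c₀ t) (j : ℤ) :
    ∃! n : ℤ, (j : ℝ) * a ≤ orb a b c t n ∧ orb a b c t n < (j : ℝ) * a + c := by
  classical
  have hcond : ∀ n : ℤ, ((j : ℝ) * a ≤ orb a b c t n ∧ orb a b c t n < (j : ℝ) * a + c) ↔
      (j ≤ ⌊orb a b c t n / a⌋ ∧ ⌊orb a b c t (n - 1) / a⌋ < j) := by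
    intro n
    have e1 : (j : ℝ) * a ≤ orb a b c t n ↔ j ≤ ⌊orb a b c t n / a⌋ := by
      rw [Int.le_floor, le_div_iff₀ H.ha]
    have e2 : orb a b c t n < (j : ℝ) * a + c ↔ ⌊orb a b c t (n - 1) / a⌋ < j := by
      have hst : ⌊orb a b c t (n - 1) / a⌋ = ⌊(orb a b c t n - c) / a⌋ := by
        have := (orb_step H hA (n - 1)).2
        simp only [sub_add_cancel] at this
        exact this.symm
      rw [hst, Int.floor_lt, div_lt_iff₀ H.ha]
      constructor <;> intro h <;> linarith
    rw [e1, e2]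
  have hP : ∃ z : ℤ, j ≤ ⌊orb a b c t z / a⌋ := by
    refine ⟨(j - ⌊orb a b c t 0 / a⌋).toNat, ?_⟩
    have h1 := beta_growth H hA 0 (j - ⌊orb a b c t 0 / a⌋).toNat (by omega)
    have h2 : (j : ℤ) - ⌊orb a b c t 0 / a⌋ ≤ ((j - ⌊orb a b c t 0 / a⌋).toNat : ℤ) :=
      Int.self_le_toNat _
    omega
  have hBdd : ∃ lb : ℤ, ∀ z : ℤ, j ≤ ⌊orb a b c t z / a⌋ → lb ≤ z := by
    refine ⟨-((⌊orb a b c t 0 / a⌋ - j + 1).toNat) + 1, ?_⟩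
    intro z hz
    by_contra hlt
    push_neg at hlt
    have hz0 : z ≤ -((⌊orb a b c t 0 / a⌋ - j + 1).toNat) := by omega
    have h1 := beta_growth H hA z (-((⌊orb a b c t 0 / a⌋ - j + 1).toNat)) hz0
    have h2 := beta_growth H hA (-((⌊orb a b c t 0 / a⌋ - j + 1).toNat)) 0 (by omega)
    have h3 : (⌊orb a b c t 0 / a⌋ : ℤ) - j + 1 ≤ ((⌊orb a b c t 0 / a⌋ - j + 1).toNat : ℤ) :=
      Int.self_le_toNat _
    omega
  obtain ⟨n0, hn0, hleast⟩ := Int.exists_least_of_bdd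
    (P := fun z => j ≤ ⌊orb a b c t z / a⌋) hBdd hP
  refine ⟨n0, ?_, ?_⟩
  · show (j : ℝ) * a ≤ orb a b c t n0 ∧ orb a b c t n0 < (j : ℝ) * a + c
    rw [hcond n0]
    refine ⟨hn0, ?_⟩
    by_contra hge
    push_neg at hge
    have := hleast (n0 - 1) hge
    omega
  · intro y hy
    replace hy := (hcond y).1 hy
    have h1 : n0 ≤ y := hleast y hy.1
    by_contra hne
    have h2 : n0 ≤ y - 1 := by omega
    have h3 := beta_growth H hA n0 (y - 1) h2
    have h4 := hy.2
    omega

end Orbit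
section Main

variable {a b c c₀ : ℝ}

lemma avoids_mem_Sset (H : Good a b c c₀) {t : ℝ} (hA : Avoids a b c c₀ t) :
    t ∈ Sset a b c := by
  classical
  set x : ℤ → ℝ := fun k => if ∃ n : ℤ, orb a b c t n = t + (k : ℝ) * b then 1 else 0 with hx
  have hbin : ∀ k, x k = 0 ∨ x k = 1 := by
    intro k
    by_cases h : ∃ n : ℤ, orb a b c t n = t + (k : ℝ) * b
    · right; simp [hx, h]
    · left; simp [hx, h]
  refine ⟨x, hbin, ?_, ?_⟩
  · have h0 : ∃ n : ℤ, orb a b c t n = t + ((0 : ℤ) : ℝ) * b := ⟨0, by simp [orb_zero]⟩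
    simp only [hx]
    rw [if_pos h0]
  · intro j
    rw [Mrow_eq_one_iff hbin j]
    obtain ⟨n, ⟨hn1, hn2⟩, huniq⟩ := orb_window H hA j
    obtain ⟨m, hm⟩ := orb_int H hA n
    refine ⟨m, ⟨⟨by linarith [hm, hn1], by linarith [hm, hn2]⟩, ?_⟩, ?_⟩
    · simp only [hx]
      rw [if_pos ⟨n, hm⟩]
    · intro k hk
      obtain ⟨⟨hk1, hk2⟩, hk3⟩ := hk
      have hex : ∃ n' : ℤ, orb a b c t n' = t + (k : ℝ) * b := by
        by_contra hne
        simp only [hx] at hk3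
        rw [if_neg hne] at hk3
        norm_num at hk3
      obtain ⟨n', hn'⟩ := hex
      have hn'w : (j : ℝ) * a ≤ orb a b c t n' ∧ orb a b c t n' < (j : ℝ) * a + c := by
        rw [hn']
        constructor <;> linarith [hk1, hk2]
      have : n' = n := huniq n' hn'w
      rw [this, hm] at hn'
      have heq : (k : ℝ) * b = (m : ℝ) * b := by linarith [hn']
      have := mul_right_cancel₀ H.hb.ne' heq
      exact_mod_cast this

lemma Sset_avoids (H : Good a b c c₀) {t : ℝ} (ht : t ∈ Sset a b c) :
    Avoids a b c c₀ t := by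
  have hfor : ∀ n : ℕ, (Rmap a b c)^[n] t ∈ Sset a b c := by
    intro n
    induction n with
    | zero => simpa using ht
    | succ n ih => rw [Function.iterate_succ_apply']; exact (forward_step H ih).2
  have hbak : ∀ n : ℕ, (Rtil a b c)^[n] t ∈ Sset a b c := by
    intro n
    induction n with
    | zero => simpa using ht
    | succ n ih => rw [Function.iterate_succ_apply']; exact (backward_step H ih).2
  exact ⟨fun n => (forward_step H (hfor n)).1, fun n => (backward_step H (hbak n)).1⟩

lemma mem_BH_iff (H : Good a b c c₀) (t : ℝ) :
    t ∈ perSet a (Set.Ico (c₀ + a - b) c₀ ∪ Set.Ico (c - c₀) (c + b - c₀ - a)) ↔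
    sphase a t ∈ Set.Ico (c₀ + a - b) c₀ ∨
      uphase a c t ∈ Set.Ico (c - c₀) (c + b - c₀ - a) := by
  have hb1 : (0:ℝ) ≤ c₀ + a - b := by linarith [H.h1]
  have hb2 : c₀ ≤ a := H.h2.le
  have hb3 : c - a ≤ c - c₀ := by linarith [H.h2]
  have hb4 : c + b - c₀ - a ≤ c := by linarith [H.h1]
  constructor
  · rintro ⟨k, hk | hk⟩
    · exact Or.inl ((mem_perSet_iff_s H.ha hb1 hb2).1 ⟨k, hk⟩)
    · exact Or.inr ((mem_perSet_iff_u H.ha hb3 hb4).1 ⟨k, hk⟩)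
  · rintro (h | h)
    · obtain ⟨k, hk⟩ := (mem_perSet_iff_s H.ha hb1 hb2).2 h
      exact ⟨k, Or.inl hk⟩
    · obtain ⟨k, hk⟩ := (mem_perSet_iff_u H.ha hb3 hb4).2 h
      exact ⟨k, Or.inr hk⟩

end Main

/-- Theorem `dabc1maximal`: with `c₀ = c − ⌊c/b⌋·b` and `b − a < c₀ < a`:
(i) `S_{a,b,c}` is the maximal set invariant under `R_{a,b,c}` and `R̃_{a,b,c}` that is
disjoint from their black holes `[c₀+a−b, c₀) + aℤ` and `[c−c₀, c+b−c₀−a) + aℤ`;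
(ii) `ℝ∖S_{a,b,c}` is the minimal set invariant under both transformations that contains
both black holes. -/
theorem S_maximal_invariant_set (a b c c₀ : ℝ)
    (ha : 0 < a) (hab : a < b) (hbc : b < c)
    (hc0 : c₀ = c - (⌊c / b⌋ : ℝ) * b) (h1 : b - a < c₀) (h2 : c₀ < a) :
    ((Rmap a b c '' Sset a b c ⊆ Sset a b c ∧ Rtil a b c '' Sset a b c ⊆ Sset a b c ∧
        Sset a b c ∩ perSet a (Set.Ico (c₀ + a - b) c₀ ∪ Set.Ico (c - c₀) (c + b - c₀ - a)) = ∅) ∧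
      (∀ E : Set ℝ, Rmap a b c '' E ⊆ E → Rtil a b c '' E ⊆ E →
        E ∩ perSet a (Set.Ico (c₀ + a - b) c₀ ∪ Set.Ico (c - c₀) (c + b - c₀ - a)) = ∅ →
        E ⊆ Sset a b c)) ∧
    ((Rmap a b c '' (Sset a b c)ᶜ ⊆ (Sset a b c)ᶜ ∧
        Rtil a b c '' (Sset a b c)ᶜ ⊆ (Sset a b c)ᶜ ∧
        perSet a (Set.Ico (c₀ + a - b) c₀ ∪ Set.Ico (c - c₀) (c + b - c₀ - a)) ⊆ (Sset a b c)ᶜ) ∧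
      (∀ F : Set ℝ, Rmap a b c '' F ⊆ F → Rtil a b c '' F ⊆ F →
        perSet a (Set.Ico (c₀ + a - b) c₀ ∪ Set.Ico (c - c₀) (c + b - c₀ - a)) ⊆ F →
        (Sset a b c)ᶜ ⊆ F)) := by
  have H : Good a b c c₀ := ⟨ha, hab, hbc, hc0, h1, h2⟩
  have hBHS : ∀ t : ℝ,
      t ∈ perSet a (Set.Ico (c₀ + a - b) c₀ ∪ Set.Ico (c - c₀) (c + b - c₀ - a)) →
      t ∉ Sset a b c := by
    intro t hbh hts
    rcases (mem_BH_iff H t).1 hbh with h | h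
    · exact (forward_step H hts).1 h
    · exact (backward_step H hts).1 h
  refine ⟨⟨⟨?_, ?_, ?_⟩, ?_⟩, ⟨?_, ?_, ?_⟩, ?_⟩
  · -- Rmap '' S ⊆ S
    rintro _ ⟨t, ht, rfl⟩
    exact (forward_step H ht).2
  · -- Rtil '' S ⊆ S
    rintro _ ⟨t, ht, rfl⟩
    exact (backward_step H ht).2
  · -- S ∩ BH = ∅
    rw [Set.eq_empty_iff_forall_notMem]
    rintro t ⟨hts, hbh⟩
    exact hBHS t hbh hts
  · -- maximality
    intro E hE1 hE2 hE3 t htE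
    apply avoids_mem_Sset H
    have hEBH : ∀ u : ℝ, u ∈ E →
        u ∉ perSet a (Set.Ico (c₀ + a - b) c₀ ∪ Set.Ico (c - c₀) (c + b - c₀ - a)) := by
      intro u hu hbh
      have : u ∈ E ∩ perSet a (Set.Ico (c₀ + a - b) c₀ ∪ Set.Ico (c - c₀) (c + b - c₀ - a)) :=
        ⟨hu, hbh⟩
      rw [hE3] at this
      exact this
    have hmem1 : ∀ n : ℕ, (Rmap a b c)^[n] t ∈ E := by
      intro n
      induction n with
      | zero => simpa using htE
      | succ n ih =>
          rw [Function.iterate_succ_apply']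
          exact hE1 ⟨_, ih, rfl⟩
    have hmem2 : ∀ n : ℕ, (Rtil a b c)^[n] t ∈ E := by
      intro n
      induction n with
      | zero => simpa using htE
      | succ n ih =>
          rw [Function.iterate_succ_apply']
          exact hE2 ⟨_, ih, rfl⟩
    constructor
    · intro n hmid
      exact hEBH _ (hmem1 n) ((mem_BH_iff H _).2 (Or.inl hmid))
    · intro n hmid
      exact hEBH _ (hmem2 n) ((mem_BH_iff H _).2 (Or.inr hmid))
  · -- Rmap '' Sᶜ ⊆ Sᶜ
    rintro _ ⟨t, ht, rfl⟩ hS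
    apply ht
    by_cases hmid : sphase a t ∈ Set.Ico (c₀ + a - b) c₀
    · rwa [Rmap_eq2 H hmid] at hS
    · rw [← inv1 H hmid]
      exact (backward_step H hS).2
  · -- Rtil '' Sᶜ ⊆ Sᶜ
    rintro _ ⟨t, ht, rfl⟩ hS
    apply ht
    by_cases hmid : uphase a c t ∈ Set.Ico (c - c₀) (c + b - c₀ - a)
    · rwa [Rtil_eq2 H hmid] at hS
    · rw [← inv2 H hmid]
      exact (forward_step H hS).2
  · -- BH ⊆ Sᶜ
    intro t hbh
    exact hBHS t hbh
  · -- minimality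
    intro F hF1 hF2 hF3 t htS
    have key1 : ∀ n : ℕ, ∀ u : ℝ,
        sphase a ((Rmap a b c)^[n] u) ∈ Set.Ico (c₀ + a - b) c₀ → u ∈ F := by
      intro n
      induction n with
      | zero => intro u hu; exact hF3 ((mem_BH_iff H u).2 (Or.inl (by simpa using hu)))
      | succ n ih =>
          intro u hu
          by_cases hmid : sphase a u ∈ Set.Ico (c₀ + a - b) c₀
          · exact hF3 ((mem_BH_iff H u).2 (Or.inl hmid))
          · have h' : sphase a ((Rmap a b c)^[n] (Rmap a b c u)) ∈ Set.Ico (c₀ + a - b) c₀ := by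
              rwa [Function.iterate_succ_apply] at hu
            have hRF : Rmap a b c u ∈ F := ih (Rmap a b c u) h'
            have := hF2 ⟨Rmap a b c u, hRF, rfl⟩
            rwa [inv1 H hmid] at this
    have key2 : ∀ n : ℕ, ∀ u : ℝ,
        uphase a c ((Rtil a b c)^[n] u) ∈ Set.Ico (c - c₀) (c + b - c₀ - a) → u ∈ F := by
      intro n
      induction n with
      | zero => intro u hu; exact hF3 ((mem_BH_iff H u).2 (Or.inr (by simpa using hu)))
      | succ n ih =>
          intro u hu
          by_cases hmid : uphase a c u ∈ Set.Ico (c - c₀) (c + b - c₀ - a)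
          · exact hF3 ((mem_BH_iff H u).2 (Or.inr hmid))
          · have h' : uphase a c ((Rtil a b c)^[n] (Rtil a b c u)) ∈
                Set.Ico (c - c₀) (c + b - c₀ - a) := by
              rwa [Function.iterate_succ_apply] at hu
            have hRF : Rtil a b c u ∈ F := ih (Rtil a b c u) h'
            have := hF1 ⟨Rtil a b c u, hRF, rfl⟩
            rwa [inv2 H hmid] at this
    have hnA : ¬ Avoids a b c c₀ t := fun hA => htS (avoids_mem_Sset H hA)
    rw [Avoids, not_and_or] at hnA
    rcases hnA with h | h
    · push_neg at h
      obtain ⟨n, hn⟩ := h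
      exact key1 n t hn
    · push_neg at h
      obtain ⟨n, hn⟩ := h
      exact key2 n t hn
end

section
/- Let (a,b,c) be a triple of positive real numbers with a < b < c and b − a < c₀ < a, where c₀ := c − ⌊c/b⌋·b. Then D_{a,b,c} = (S_{a,b,c} ∩ ([0, c₀+a−b) + aℤ) ∩ (S_{a,b,c} − ⌊c/b⌋b)) ∪ (S_{a,b,c} ∩ ⋃_{λ} (S_{a,b,c} − λ)), where the union is over all λ ∈ bℤ with b ≤ λ ≤ (⌊c/b⌋ − 1)b, and S − r := {s − r : s ∈ S}. -/
open MeasureTheory Set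

open Classical

/-- window membership -/
def Win (a b c t : ℝ) (j k : ℤ) : Prop :=
  0 ≤ t - (j : ℝ) * a + (k : ℝ) * b ∧ t - (j : ℝ) * a + (k : ℝ) * b < c

open Finset in
/-- For binary `x`, `Mrow` equals a finite cardinality. -/
lemma mrow_eq_card (a b c t : ℝ) (hb : 0 < b) (x : ℤ → ℝ)
    (hx : ∀ k, x k = 0 ∨ x k = 1) (j : ℤ) :
    Mrow a b c t x j =
      ((Finset.Icc ⌈((j:ℝ)*a - t)/b⌉ ⌊(((j:ℝ)*a - t) + c)/b⌋).filter
        (fun k => Win a b c t j k ∧ x k = 1)).card := by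
  have key : ∀ k : ℤ, chiIco c (t - (j : ℝ) * a + (k : ℝ) * b) * x k
      = if Win a b c t j k ∧ x k = 1 then 1 else 0 := by
    intro k
    rcases hx k with h | h <;> unfold chiIco Win <;>
      rcases le_or_gt 0 (t - (j : ℝ) * a + (k : ℝ) * b) with h1 | h1 <;>
      rcases lt_or_ge (t - (j : ℝ) * a + (k : ℝ) * b) c with h2 | h2 <;>
      simp [h, h1, h2, h1.not_gt] <;> try simp [not_le.mpr h1]
  have hsub : ∀ k : ℤ, Win a b c t j k →
      k ∈ Finset.Icc ⌈((j:ℝ)*a - t)/b⌉ ⌊(((j:ℝ)*a - t) + c)/b⌋ := by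
    intro k hk
    rw [Finset.mem_Icc]
    constructor
    · rw [Int.ceil_le]
      rw [div_le_iff₀ hb]
      linarith [hk.1]
    · rw [Int.le_floor]
      rw [le_div_iff₀ hb]
      linarith [hk.2]
  rw [Mrow, tsum_eq_sum (s := Finset.Icc ⌈((j:ℝ)*a - t)/b⌉ ⌊(((j:ℝ)*a - t) + c)/b⌋)]
  · rw [Finset.sum_congr rfl (fun k _ => key k), Finset.sum_boole]
  · intro k hk
    by_contra h
    have hw : Win a b c t j k ∧ x k = 1 := by
      by_contra hw
      rw [key k, if_neg hw] at h
      exact h rfl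
    exact hk (hsub k hw.1)

lemma card_filter_eq_one_iff {s : Finset ℤ} {P : ℤ → Prop} [DecidablePred P]
    (h : ∀ k, P k → k ∈ s) :
    (s.filter P).card = 1 ↔ ∃! k, P k := by
  rw [Finset.card_eq_one]
  constructor
  · rintro ⟨w, hw⟩
    have hwP : P w := by
      have : w ∈ s.filter P := hw ▸ Finset.mem_singleton_self w
      exact (Finset.mem_filter.1 this).2
    refine ⟨w, hwP, fun k hk => ?_⟩
    have : k ∈ s.filter P := Finset.mem_filter.2 ⟨h k hk, hk⟩
    rw [hw] at this
    exact Finset.mem_singleton.1 this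
  · rintro ⟨w, hwP, hu⟩
    refine ⟨w, Finset.eq_singleton_iff_unique_mem.2 ⟨Finset.mem_filter.2 ⟨h w hwP, hwP⟩, ?_⟩⟩
    intro k hk
    exact hu k (Finset.mem_filter.1 hk).2

lemma card_filter_eq_two_iff {s : Finset ℤ} {P : ℤ → Prop} [DecidablePred P]
    (h : ∀ k, P k → k ∈ s) :
    (s.filter P).card = 2 ↔
      ∃ k₁ k₂ : ℤ, k₁ < k₂ ∧ P k₁ ∧ P k₂ ∧ ∀ k, P k → k = k₁ ∨ k = k₂ := by
  rw [Finset.card_eq_two]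
  constructor
  · rintro ⟨u, v, huv, hs⟩
    have hu : P u := by
      have : u ∈ s.filter P := hs ▸ by simp
      exact (Finset.mem_filter.1 this).2
    have hv : P v := by
      have : v ∈ s.filter P := hs ▸ by simp
      exact (Finset.mem_filter.1 this).2
    have htot : ∀ k, P k → k = u ∨ k = v := by
      intro k hk
      have : k ∈ s.filter P := Finset.mem_filter.2 ⟨h k hk, hk⟩
      rw [hs] at this
      simpa using this
    rcases lt_or_gt_of_ne huv with hlt | hgt
    · exact ⟨u, v, hlt, hu, hv, htot⟩
    · exact ⟨v, u, hgt, hv, hu, fun k hk => (htot k hk).symm⟩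
  · rintro ⟨k₁, k₂, hlt, h1, h2, htot⟩
    refine ⟨k₁, k₂, hlt.ne, ?_⟩
    ext k
    simp only [Finset.mem_filter, Finset.mem_insert, Finset.mem_singleton]
    constructor
    · rintro ⟨-, hk⟩
      exact htot k hk
    · rintro (rfl | rfl)
      · exact ⟨h _ h1, h1⟩
      · exact ⟨h _ h2, h2⟩

lemma win_mem_Icc {a b c t : ℝ} (hb : 0 < b) {j k : ℤ} (hk : Win a b c t j k) :
    k ∈ Finset.Icc ⌈((j:ℝ)*a - t)/b⌉ ⌊(((j:ℝ)*a - t) + c)/b⌋ := by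
  rw [Finset.mem_Icc]
  constructor
  · rw [Int.ceil_le, div_le_iff₀ hb]
    linarith [hk.1]
  · rw [Int.le_floor, le_div_iff₀ hb]
    linarith [hk.2]

lemma mrow_eq_one_iff (a b c t : ℝ) (hb : 0 < b) (x : ℤ → ℝ)
    (hx : ∀ k, x k = 0 ∨ x k = 1) (j : ℤ) :
    Mrow a b c t x j = 1 ↔ ∃! k : ℤ, Win a b c t j k ∧ x k = 1 := by
  rw [mrow_eq_card a b c t hb x hx j]
  have h' := card_filter_eq_one_iff
    (s := Finset.Icc ⌈((j:ℝ)*a - t)/b⌉ ⌊(((j:ℝ)*a - t) + c)/b⌋)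
    (P := fun k => Win a b c t j k ∧ x k = 1) (fun k hk => win_mem_Icc hb hk.1)
  constructor
  · intro h
    exact h'.1 (by exact_mod_cast h)
  · intro h
    exact_mod_cast h'.2 h

lemma mrow_eq_two_iff (a b c t : ℝ) (hb : 0 < b) (x : ℤ → ℝ)
    (hx : ∀ k, x k = 0 ∨ x k = 1) (j : ℤ) :
    Mrow a b c t x j = 2 ↔
      ∃ k₁ k₂ : ℤ, k₁ < k₂ ∧ (Win a b c t j k₁ ∧ x k₁ = 1) ∧ (Win a b c t j k₂ ∧ x k₂ = 1) ∧
        ∀ k, Win a b c t j k → x k = 1 → k = k₁ ∨ k = k₂ := by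
  rw [mrow_eq_card a b c t hb x hx j]
  have h' := card_filter_eq_two_iff
    (s := Finset.Icc ⌈((j:ℝ)*a - t)/b⌉ ⌊(((j:ℝ)*a - t) + c)/b⌋)
    (P := fun k => Win a b c t j k ∧ x k = 1) (fun k hk => win_mem_Icc hb hk.1)
  constructor
  · intro h
    obtain ⟨k₁, k₂, hlt, h1, h2, htot⟩ := h'.1 (by exact_mod_cast h)
    exact ⟨k₁, k₂, hlt, h1, h2, fun k hw hx1 => htot k ⟨hw, hx1⟩⟩
  · rintro ⟨k₁, k₂, hlt, h1, h2, htot⟩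
    exact_mod_cast h'.2 ⟨k₁, k₂, hlt, h1, h2, fun k hk => htot k hk.1 hk.2⟩

/-- Single cover predicate: every window contains exactly one selected index. -/
def SCov (a b c t : ℝ) (Λ : ℤ → Prop) : Prop :=
  ∀ j : ℤ, ∃! k : ℤ, Λ k ∧ Win a b c t j k

/-- Double cover predicate. -/
def DCov (a b c t : ℝ) (Λ : ℤ → Prop) : Prop :=
  ∀ j : ℤ, ∃ k₁ k₂ : ℤ, k₁ < k₂ ∧ (Λ k₁ ∧ Win a b c t j k₁) ∧ (Λ k₂ ∧ Win a b c t j k₂) ∧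
    ∀ k, Λ k → Win a b c t j k → k = k₁ ∨ k = k₂

/-- Bundled hypotheses. -/
structure GH (a b c c₀ : ℝ) (q : ℤ) : Prop where
  ha : 0 < a
  hab : a < b
  hq1 : 1 ≤ q
  hc : c = (q:ℝ) * b + c₀
  h1 : b - a < c₀
  h2 : c₀ < a

namespace GH

variable {a b c c₀ : ℝ} {q : ℤ}

lemma hb (H : GH a b c c₀ q) : 0 < b := H.ha.trans H.hab
lemma hc0 (H : GH a b c c₀ q) : 0 < c₀ := by have := H.hab; have := H.h1; linarith
lemma hc0b (H : GH a b c c₀ q) : c₀ < b := H.h2.trans H.hab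
lemma hqR (H : GH a b c c₀ q) : (1:ℝ) ≤ (q:ℝ) := by exact_mod_cast H.hq1
lemma hcpos (H : GH a b c c₀ q) : 0 < c := by
  have := H.hb; have := H.hc0; have := H.hqR; nlinarith [H.hc]

/-- any half-open interval `(α, β]` with `β - α ≥ a` contains a grid point `j*a - t`. -/
lemma exists_start (H : GH a b c c₀ q) (t α β : ℝ) (h : α + a ≤ β) :
    ∃ j : ℤ, α < (j:ℝ) * a - t ∧ (j:ℝ) * a - t ≤ β := by
  have h2 : ((β + t)/a) * a = β + t := div_mul_cancel₀ _ H.ha.ne'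
  refine ⟨⌊(β + t)/a⌋, ?_, ?_⟩
  · have h1 : (β + t)/a - 1 < (⌊(β + t)/a⌋ : ℝ) := Int.sub_one_lt_floor _
    have h3 := mul_lt_mul_of_pos_right h1 H.ha
    have h4 : ((β + t)/a - 1) * a = β + t - a := by rw [sub_mul, h2, one_mul]
    linarith
  · have h1 : (⌊(β + t)/a⌋ : ℝ) ≤ (β + t)/a := Int.floor_le _
    have h3 := mul_le_mul_of_nonneg_right h1 H.ha.le
    linarith

lemma win_convex {t : ℝ} (H : GH a b c c₀ q) {j k₁ k₂ k : ℤ} (h1 : Win a b c t j k₁)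
    (h2 : Win a b c t j k₂) (hk1 : k₁ ≤ k) (hk2 : k ≤ k₂) : Win a b c t j k := by
  have e1 : (k₁:ℝ) * b ≤ (k:ℝ) * b :=
    mul_le_mul_of_nonneg_right (by exact_mod_cast hk1) H.hb.le
  have e2 : (k:ℝ) * b ≤ (k₂:ℝ) * b :=
    mul_le_mul_of_nonneg_right (by exact_mod_cast hk2) H.hb.le
  exact ⟨by linarith [h1.1], by linarith [h2.2]⟩

/-- Two distinct selected points of a single cover differ by at least `q`. -/
lemma scov_gap {t : ℝ} {Λ : ℤ → Prop} (H : GH a b c c₀ q) (hS : SCov a b c t Λ)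
    {k₁ k₂ : ℤ} (h1 : Λ k₁) (h2 : Λ k₂) (hlt : k₁ < k₂) : k₁ + q ≤ k₂ := by
  by_contra hcon
  push_neg at hcon
  have hk2 : k₂ ≤ k₁ + q - 1 := by omega
  have hk2R : (k₂:ℝ) ≤ (k₁:ℝ) + (q:ℝ) - 1 := by exact_mod_cast hk2
  have hltR : (k₁:ℝ) + 1 ≤ (k₂:ℝ) := by exact_mod_cast hlt
  have hbpos := H.hb
  obtain ⟨j, hj1, hj2⟩ := H.exists_start t ((k₂:ℝ)*b - c) ((k₁:ℝ)*b) (by nlinarith [H.hc, H.hc0, H.hab])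
  have w1 : Win a b c t j k₁ := by constructor <;> [linarith; nlinarith]
  have w2 : Win a b c t j k₂ := by constructor <;> [nlinarith; linarith]
  have := (hS j).unique ⟨h1, w1⟩ ⟨h2, w2⟩
  omega

/-- Selected points exist above any bound. -/
lemma scov_above {t : ℝ} {Λ : ℤ → Prop} (H : GH a b c c₀ q) (hS : SCov a b c t Λ)
    (N : ℤ) : ∃ k, Λ k ∧ N < k := by
  obtain ⟨j, hj1, hj2⟩ := H.exists_start t ((N:ℝ)*b) ((N:ℝ)*b + a) (by linarith)
  obtain ⟨k, ⟨hk, hw⟩, -⟩ := hS j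
  refine ⟨k, hk, ?_⟩
  by_contra hcon
  push_neg at hcon
  have : (k:ℝ) * b ≤ (N:ℝ) * b :=
    mul_le_mul_of_nonneg_right (by exact_mod_cast hcon) H.hb.le
  linarith [hw.1]

lemma scov_below {t : ℝ} {Λ : ℤ → Prop} (H : GH a b c c₀ q) (hS : SCov a b c t Λ)
    (N : ℤ) : ∃ k, Λ k ∧ k < N := by
  obtain ⟨j, hj1, hj2⟩ := H.exists_start t ((N:ℝ)*b - c - a) ((N:ℝ)*b - c) (by linarith)
  obtain ⟨k, ⟨hk, hw⟩, -⟩ := hS j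
  refine ⟨k, hk, ?_⟩
  by_contra hcon
  push_neg at hcon
  have : (N:ℝ) * b ≤ (k:ℝ) * b :=
    mul_le_mul_of_nonneg_right (by exact_mod_cast hcon) H.hb.le
  linarith [hw.2]

/-- No window can be empty: there is no grid point `s` with `(r₁b, s]` ... i.e. if all of `Λ`
avoids `(r₁, r₂)` then no window fits inside the hole. -/
lemma scov_nohole {t : ℝ} {Λ : ℤ → Prop} (H : GH a b c c₀ q) (hS : SCov a b c t Λ)
    {r₁ r₂ : ℤ} (hhole : ∀ k, Λ k → k ≤ r₁ ∨ r₂ ≤ k) {j : ℤ}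
    (hj1 : (r₁:ℝ) * b < (j:ℝ) * a - t) (hj2 : (j:ℝ) * a - t + c ≤ (r₂:ℝ) * b) : False := by
  obtain ⟨k, ⟨hk, hw⟩, -⟩ := hS j
  rcases hhole k hk with h | h
  · have : (k:ℝ) * b ≤ (r₁:ℝ) * b := mul_le_mul_of_nonneg_right (by exact_mod_cast h) H.hb.le
    linarith [hw.1]
  · have : (r₂:ℝ) * b ≤ (k:ℝ) * b := mul_le_mul_of_nonneg_right (by exact_mod_cast h) H.hb.le
    linarith [hw.2]

/-- No window can contain two selected points `r` and `r + q`. -/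
lemma scov_nopair {t : ℝ} {Λ : ℤ → Prop} (H : GH a b c c₀ q) (hS : SCov a b c t Λ)
    {r j : ℤ} (h1 : Λ r) (h2 : Λ (r + q))
    (hj1 : (r:ℝ) * b - c₀ < (j:ℝ) * a - t) (hj2 : (j:ℝ) * a - t ≤ (r:ℝ) * b) : False := by
  have hqb : (0:ℝ) < (q:ℝ) * b := by nlinarith [H.hqR, H.hb]
  have hrq : ((r + q : ℤ):ℝ) * b = (r:ℝ) * b + (q:ℝ) * b := by push_cast; ring
  have w1 : Win a b c t j r := ⟨by linarith, by nlinarith [H.hc, H.hc0]⟩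
  have w2 : Win a b c t j (r + q) := by
    constructor
    · rw [hrq]; linarith
    · rw [hrq]; nlinarith [H.hc]
  have := (hS j).unique ⟨h1, w1⟩ ⟨h2, w2⟩
  have := H.hq1
  omega

/-- Least selected point above `p`. -/
lemma scov_next {t : ℝ} {Λ : ℤ → Prop} (H : GH a b c c₀ q) (hS : SCov a b c t Λ)
    {p : ℤ} (hp : Λ p) :
    ∃ n : ℤ, Λ n ∧ p < n ∧ (∀ k, Λ k → p < k → n ≤ k) ∧ (n = p + q ∨ n = p + q + 1) := by
  classical
  obtain ⟨r, hr, hrp⟩ := H.scov_above hS p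
  obtain ⟨n, ⟨hn, hpn⟩, hleast⟩ :=
    Int.exists_least_of_bdd (P := fun k => Λ k ∧ p < k)
      ⟨p, fun z hz => hz.2.le⟩ ⟨r, hr, hrp⟩
  have hleast' : ∀ k, Λ k → p < k → n ≤ k := fun k h1 h2 => hleast k ⟨h1, h2⟩
  refine ⟨n, hn, hpn, hleast', ?_⟩
  have hlow : p + q ≤ n := H.scov_gap hS hp hn hpn
  -- upper bound: a window with start in (p*b, p*b + a]
  obtain ⟨j, hj1, hj2⟩ := H.exists_start t ((p:ℝ)*b) ((p:ℝ)*b + a) (by linarith)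
  obtain ⟨k, ⟨hk, hw⟩, -⟩ := hS j
  have hkp : p < k := by
    by_contra hcon
    push_neg at hcon
    have : (k:ℝ) * b ≤ (p:ℝ) * b := mul_le_mul_of_nonneg_right (by exact_mod_cast hcon) H.hb.le
    linarith [hw.1]
  have hub : k ≤ p + q + 1 := by
    by_contra hcon
    push_neg at hcon
    have : ((p + q + 2 : ℤ):ℝ) ≤ (k:ℝ) := by exact_mod_cast (by omega : p + q + 2 ≤ k)
    have h3 : ((p:ℝ) + (q:ℝ) + 2) * b ≤ (k:ℝ) * b := by
      apply mul_le_mul_of_nonneg_right _ H.hb.le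
      push_cast at this ⊢
      linarith
    have := hw.2
    nlinarith [H.hc, H.h2, H.hab, H.hc0b]
  have := hleast' k hk hkp
  omega

/-- Greatest selected point below `p`. -/
lemma scov_prev {t : ℝ} {Λ : ℤ → Prop} (H : GH a b c c₀ q) (hS : SCov a b c t Λ)
    {p : ℤ} (hp : Λ p) :
    ∃ m : ℤ, Λ m ∧ m < p ∧ (∀ k, Λ k → k < p → k ≤ m) ∧ (m = p - q ∨ m = p - q - 1) := by
  classical
  obtain ⟨r, hr, hrp⟩ := H.scov_below hS p
  obtain ⟨m, ⟨hm, hpm⟩, hgreat⟩ :=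
    Int.exists_greatest_of_bdd (P := fun k => Λ k ∧ k < p)
      ⟨p, fun z hz => hz.2.le⟩ ⟨r, hr, hrp⟩
  have hgreat' : ∀ k, Λ k → k < p → k ≤ m := fun k h1 h2 => hgreat k ⟨h1, h2⟩
  refine ⟨m, hm, hpm, hgreat', ?_⟩
  have hlow : m + q ≤ p := H.scov_gap hS hm hp hpm
  -- lower bound: a window with start in (p*b - c - a, p*b - c]
  obtain ⟨j, hj1, hj2⟩ := H.exists_start t ((p:ℝ)*b - c - a) ((p:ℝ)*b - c) (by linarith)
  obtain ⟨k, ⟨hk, hw⟩, -⟩ := hS j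
  have hkp : k < p := by
    by_contra hcon
    push_neg at hcon
    have : (p:ℝ) * b ≤ (k:ℝ) * b := mul_le_mul_of_nonneg_right (by exact_mod_cast hcon) H.hb.le
    linarith [hw.2]
  have hub : p - q - 1 ≤ k := by
    by_contra hcon
    push_neg at hcon
    have : (k:ℝ) ≤ ((p - q - 2 : ℤ):ℝ) := by exact_mod_cast (by omega : k ≤ p - q - 2)
    have h3 : (k:ℝ) * b ≤ ((p:ℝ) - (q:ℝ) - 2) * b := by
      apply mul_le_mul_of_nonneg_right _ H.hb.le
      push_cast at this ⊢
      linarith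
    have := hw.1
    nlinarith [H.hc, H.h2, H.hab, H.hc0b]
  have := hgreat' k hk hkp
  omega

/-- The successor of a shared point is the same in any two single covers. -/
lemma scov_next_eq {t : ℝ} {Λ Λ' : ℤ → Prop} (H : GH a b c c₀ q)
    (hS : SCov a b c t Λ) (hS' : SCov a b c t Λ') {p : ℤ} (hp : Λ p) (hp' : Λ' p)
    {n n' : ℤ} (hn : Λ n ∧ p < n ∧ (∀ k, Λ k → p < k → n ≤ k) ∧ (n = p + q ∨ n = p + q + 1))
    (hn' : Λ' n' ∧ p < n' ∧ (∀ k, Λ' k → p < k → n' ≤ k) ∧ (n' = p + q ∨ n' = p + q + 1)) :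
    n = n' := by
  obtain ⟨hΛn, hpn, hln, hcn⟩ := hn
  obtain ⟨hΛn', hpn', hln', hcn'⟩ := hn'
  rcases hcn with h | h <;> rcases hcn' with h' | h'
  · omega
  · exfalso
    obtain ⟨j, hj1, hj2⟩ :=
      H.exists_start t ((p:ℝ)*b - c₀) ((p:ℝ)*b + b - c₀) (by linarith [H.hab])
    rcases le_or_gt ((j:ℝ)*a - t) ((p:ℝ)*b) with hle | hgt
    · exact H.scov_nopair hS hp (h ▸ hΛn) hj1 hle
    · refine H.scov_nohole hS' (r₁ := p) (r₂ := p + q + 1) ?_ hgt ?_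
      · intro k hk
        rcases le_or_gt k p with hh | hh
        · exact Or.inl hh
        · exact Or.inr (h' ▸ hln' k hk hh)
      · have heq : ((p + q + 1 : ℤ):ℝ) * b = (p:ℝ)*b + (q:ℝ)*b + b := by push_cast; ring
        rw [heq]
        linarith [H.hc, hj2]
  · exfalso
    obtain ⟨j, hj1, hj2⟩ :=
      H.exists_start t ((p:ℝ)*b - c₀) ((p:ℝ)*b + b - c₀) (by linarith [H.hab])
    rcases le_or_gt ((j:ℝ)*a - t) ((p:ℝ)*b) with hle | hgt
    · exact H.scov_nopair hS' hp' (h' ▸ hΛn') hj1 hle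
    · refine H.scov_nohole hS (r₁ := p) (r₂ := p + q + 1) ?_ hgt ?_
      · intro k hk
        rcases le_or_gt k p with hh | hh
        · exact Or.inl hh
        · exact Or.inr (h ▸ hln k hk hh)
      · have heq : ((p + q + 1 : ℤ):ℝ) * b = (p:ℝ)*b + (q:ℝ)*b + b := by push_cast; ring
        rw [heq]
        linarith [H.hc, hj2]
  · omega

/-- The predecessor of a shared point is the same in any two single covers. -/
lemma scov_prev_eq {t : ℝ} {Λ Λ' : ℤ → Prop} (H : GH a b c c₀ q)
    (hS : SCov a b c t Λ) (hS' : SCov a b c t Λ') {p : ℤ} (hp : Λ p) (hp' : Λ' p)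
    {m m' : ℤ} (hm : Λ m ∧ m < p ∧ (∀ k, Λ k → k < p → k ≤ m) ∧ (m = p - q ∨ m = p - q - 1))
    (hm' : Λ' m' ∧ m' < p ∧ (∀ k, Λ' k → k < p → k ≤ m') ∧ (m' = p - q ∨ m' = p - q - 1)) :
    m = m' := by
  obtain ⟨hΛm, hpm, hgm, hcm⟩ := hm
  obtain ⟨hΛm', hpm', hgm', hcm'⟩ := hm'
  have hpq : ((p - q : ℤ):ℝ) * b = (p:ℝ)*b - (q:ℝ)*b := by push_cast; ring
  have hpq1 : ((p - q - 1 : ℤ):ℝ) * b = (p:ℝ)*b - (q:ℝ)*b - b := by push_cast; ring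
  have hadd : p - q + q = p := by ring
  rcases hcm with h | h <;> rcases hcm' with h' | h'
  · omega
  · exfalso
    obtain ⟨j, hj1, hj2⟩ :=
      H.exists_start t ((p:ℝ)*b - (q:ℝ)*b - b) ((p:ℝ)*b - (q:ℝ)*b) (by linarith [H.hab])
    rcases le_or_gt ((j:ℝ)*a - t) ((p:ℝ)*b - (q:ℝ)*b - c₀) with hle | hgt
    · refine H.scov_nohole hS' (r₁ := p - q - 1) (r₂ := p) ?_ (by rw [hpq1]; linarith) ?_
      · intro k hk
        rcases lt_or_ge k p with hh | hh
        · exact Or.inl (h' ▸ hgm' k hk hh)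
        · exact Or.inr hh
      · linarith [H.hc]
    · exact H.scov_nopair (r := p - q) hS (h ▸ hΛm) (by rw [hadd]; exact hp)
        (by rw [hpq]; linarith) (by rw [hpq]; linarith)
  · exfalso
    obtain ⟨j, hj1, hj2⟩ :=
      H.exists_start t ((p:ℝ)*b - (q:ℝ)*b - b) ((p:ℝ)*b - (q:ℝ)*b) (by linarith [H.hab])
    rcases le_or_gt ((j:ℝ)*a - t) ((p:ℝ)*b - (q:ℝ)*b - c₀) with hle | hgt
    · refine H.scov_nohole hS (r₁ := p - q - 1) (r₂ := p) ?_ (by rw [hpq1]; linarith) ?_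
      · intro k hk
        rcases lt_or_ge k p with hh | hh
        · exact Or.inl (h ▸ hgm k hk hh)
        · exact Or.inr hh
      · linarith [H.hc]
    · exact H.scov_nopair (r := p - q) hS' (h' ▸ hΛm') (by rw [hadd]; exact hp')
        (by rw [hpq]; linarith) (by rw [hpq]; linarith)
  · omega

lemma scov_share_fwd {t : ℝ} {Λ Λ' : ℤ → Prop} (H : GH a b c c₀ q)
    (hS : SCov a b c t Λ) (hS' : SCov a b c t Λ') {r : ℤ} (hr : Λ r) :
    ∀ N : ℕ, ∀ p : ℤ, Λ p → Λ' p → (r - p).toNat ≤ N → p ≤ r → Λ' r := by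
  intro N
  induction N with
  | zero =>
    intro p hp hp' hle hpr
    have : p = r := by omega
    exact this ▸ hp'
  | succ N ih =>
    intro p hp hp' hle hpr
    rcases eq_or_lt_of_le hpr with heq | hlt
    · exact heq ▸ hp'
    · obtain ⟨n, hn⟩ := H.scov_next hS hp
      obtain ⟨n', hn'⟩ := H.scov_next hS' hp'
      have heqn : n = n' := H.scov_next_eq hS hS' hp hp' hn hn'
      have hnr : n ≤ r := hn.2.2.1 r hr hlt
      exact ih n hn.1 (heqn ▸ hn'.1) (by omega) hnr

lemma scov_share_bwd {t : ℝ} {Λ Λ' : ℤ → Prop} (H : GH a b c c₀ q)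
    (hS : SCov a b c t Λ) (hS' : SCov a b c t Λ') {r : ℤ} (hr : Λ r) :
    ∀ N : ℕ, ∀ p : ℤ, Λ p → Λ' p → (p - r).toNat ≤ N → r ≤ p → Λ' r := by
  intro N
  induction N with
  | zero =>
    intro p hp hp' hle hpr
    have : p = r := by omega
    exact this ▸ hp'
  | succ N ih =>
    intro p hp hp' hle hpr
    rcases eq_or_lt_of_le hpr with heq | hlt
    · exact heq.symm ▸ hp'
    · obtain ⟨m, hm⟩ := H.scov_prev hS hp
      obtain ⟨m', hm'⟩ := H.scov_prev hS' hp'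
      have heqm : m = m' := H.scov_prev_eq hS hS' hp hp' hm hm'
      have hmr : r ≤ m := hm.2.2.1 r hr hlt
      exact ih m hm.1 (heqm ▸ hm'.1) (by omega) hmr

/-- Two single covers sharing one point share every point. -/
lemma scov_share {t : ℝ} {Λ Λ' : ℤ → Prop} (H : GH a b c c₀ q)
    (hS : SCov a b c t Λ) (hS' : SCov a b c t Λ') {p r : ℤ} (hp : Λ p) (hp' : Λ' p)
    (hr : Λ r) : Λ' r := by
  rcases le_total p r with h | h
  · exact H.scov_share_fwd hS hS' hr (r - p).toNat p hp hp' le_rfl h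
  · exact H.scov_share_bwd hS hS' hr (p - r).toNat p hp hp' le_rfl h

end GH

open Classical in
/-- Signed counting function: number of selected indices in `[0, k)` (negative part signed). -/
noncomputable def indF (Λ : ℤ → Prop) (k : ℤ) : ℤ :=
  (((Finset.Ico 0 k).filter Λ).card : ℤ) - (((Finset.Ico k 0).filter Λ).card : ℤ)

open Classical in
lemma indF_zero (Λ : ℤ → Prop) : indF Λ 0 = 0 := by simp [indF]

open Classical in
lemma indF_step (Λ : ℤ → Prop) (k : ℤ) :
    indF Λ (k + 1) = indF Λ k + (if Λ k then 1 else 0) := by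
  rcases le_or_gt 0 k with h | h
  · have h1 : Finset.Ico 0 (k+1) = insert k (Finset.Ico 0 k) := by
      ext m; simp [Finset.mem_Ico]; omega
    have h2 : Finset.Ico (k+1) 0 = (∅ : Finset ℤ) := by
      ext m; simp [Finset.mem_Ico]; omega
    have h3 : Finset.Ico k 0 = (∅ : Finset ℤ) := by
      ext m; simp [Finset.mem_Ico]; omega
    have hk : k ∉ Finset.Ico 0 k := by simp
    rw [indF, indF, h1, h2, h3, Finset.filter_insert]
    split
    · rw [Finset.card_insert_of_notMem (fun hc => hk (Finset.mem_of_mem_filter k hc))]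
      push_cast; ring
    · ring
  · have h1 : Finset.Ico 0 (k+1) = (∅ : Finset ℤ) := by
      ext m; simp [Finset.mem_Ico]; omega
    have h2 : Finset.Ico 0 k = (∅ : Finset ℤ) := by
      ext m; simp [Finset.mem_Ico]; omega
    have h3 : Finset.Ico k 0 = insert k (Finset.Ico (k+1) 0) := by
      ext m; simp [Finset.mem_Ico]; omega
    have hk : k ∉ Finset.Ico (k+1) 0 := by simp
    rw [indF, indF, h1, h2, h3, Finset.filter_insert]
    split
    · rw [Finset.card_insert_of_notMem (fun hc => hk (Finset.mem_of_mem_filter k hc))]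
      push_cast; ring
    · ring

open Classical in
lemma indF_interval (Λ : ℤ → Prop) {p r : ℤ} (h : p ≤ r) :
    indF Λ r = indF Λ p + (((Finset.Ico p r).filter Λ).card : ℤ) := by
  have key : ∀ N : ℕ, indF Λ (p + N) = indF Λ p + (((Finset.Ico p (p + N)).filter Λ).card : ℤ) := by
    intro N
    induction N with
    | zero => simp
    | succ N ih =>
      have e : (p + (N + 1 : ℕ) : ℤ) = (p + N) + 1 := by push_cast; ring
      have h1 : Finset.Ico p ((p + N) + 1) = insert (p + N) (Finset.Ico p (p + N)) := by
        ext m; simp [Finset.mem_Ico] <;> omega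
      have hk : (p + (N:ℤ)) ∉ Finset.Ico p (p + N) := by simp
      rw [e, indF_step, ih, h1, Finset.filter_insert]
      split
      · rw [Finset.card_insert_of_notMem (fun hc => hk (Finset.mem_of_mem_filter _ hc))]
        push_cast; ring
      · ring
  have e : r = p + ((r - p).toNat : ℤ) := by omega
  rw [e]
  exact key _

namespace GH

variable {a b c c₀ : ℝ} {q : ℤ}

open Classical in
/-- A double cover splits into two single covers by parity of the counting index. -/
lemma dcov_parity (H : GH a b c c₀ q) {t : ℝ} {Λ : ℤ → Prop} (hD : DCov a b c t Λ) :
    SCov a b c t (fun k => Λ k ∧ Even (indF Λ k)) ∧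
      SCov a b c t (fun k => Λ k ∧ ¬Even (indF Λ k)) := by
  have key : ∀ j : ℤ, ∃ k₁ k₂ : ℤ, k₁ < k₂ ∧ (Λ k₁ ∧ Win a b c t j k₁) ∧
      (Λ k₂ ∧ Win a b c t j k₂) ∧ (∀ k, Λ k → Win a b c t j k → k = k₁ ∨ k = k₂) ∧
      indF Λ k₂ = indF Λ k₁ + 1 := by
    intro j
    obtain ⟨k₁, k₂, hlt, ⟨h1, w1⟩, ⟨h2, w2⟩, huniq⟩ := hD j
    refine ⟨k₁, k₂, hlt, ⟨h1, w1⟩, ⟨h2, w2⟩, huniq, ?_⟩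
    have hcard : (Finset.Ico k₁ k₂).filter Λ = {k₁} := by
      ext k
      simp only [Finset.mem_filter, Finset.mem_Ico, Finset.mem_singleton]
      constructor
      · rintro ⟨⟨hk1, hk2⟩, hk⟩
        rcases huniq k hk (H.win_convex w1 w2 hk1 hk2.le) with h | h
        · exact h
        · omega
      · rintro rfl
        exact ⟨⟨le_rfl, hlt⟩, h1⟩
    rw [indF_interval Λ hlt.le, hcard]
    simp
  constructor <;> intro j <;> obtain ⟨k₁, k₂, hlt, ⟨h1, w1⟩, ⟨h2, w2⟩, huniq, hind⟩ := key j
  · -- even part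
    rcases Int.even_or_odd (indF Λ k₁) with he | ho
    · refine ⟨k₁, ⟨⟨h1, he⟩, w1⟩, ?_⟩
      rintro k ⟨⟨hk, hke⟩, hw⟩
      rcases huniq k hk hw with h | h
      · exact h
      · exfalso
        rw [h, hind] at hke
        exact (Int.even_add_one.mp hke) he
    · refine ⟨k₂, ⟨⟨h2, by rw [hind]; exact Int.even_add_one.mpr (Int.not_even_iff_odd.mpr ho)⟩, w2⟩, ?_⟩
      rintro k ⟨⟨hk, hke⟩, hw⟩
      rcases huniq k hk hw with h | h
      · exfalso
        rw [h] at hke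
        exact (Int.not_even_iff_odd.mpr ho) hke
      · exact h
  · -- odd part
    rcases Int.even_or_odd (indF Λ k₁) with he | ho
    · refine ⟨k₂, ⟨⟨h2, by rw [hind]; exact fun hc => (Int.even_add_one.mp hc) he⟩, w2⟩, ?_⟩
      rintro k ⟨⟨hk, hke⟩, hw⟩
      rcases huniq k hk hw with h | h
      · exfalso
        rw [h] at hke
        exact hke he
      · exact h
    · refine ⟨k₁, ⟨⟨h1, Int.not_even_iff_odd.mpr ho⟩, w1⟩, ?_⟩
      rintro k ⟨⟨hk, hke⟩, hw⟩
      rcases huniq k hk hw with h | h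
      · exact h
      · exfalso
        rw [h, hind] at hke
        exact hke (Int.even_add_one.mpr (Int.not_even_iff_odd.mpr ho))

end GH

open Classical in
/-- From a single cover predicate to a binary `Mrow = 1` witness. -/
lemma scov_mrow {a b c t : ℝ} (hb : 0 < b) {P : ℤ → Prop} (hP : SCov a b c t P) (j : ℤ) :
    Mrow a b c t (fun k => if P k then (1:ℝ) else 0) j = 1 := by
  rw [mrow_eq_one_iff a b c t hb _ (fun k => by by_cases h : P k <;> simp [h]) j]
  obtain ⟨k, ⟨hk, hw⟩, huniq⟩ := hP j
  refine ⟨k, ⟨hw, by simp [hk]⟩, ?_⟩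
  rintro k' ⟨hw', hx'⟩
  have hk' : P k' := by by_contra hc; simp [hc] at hx'
  exact huniq k' ⟨hk', hw'⟩

/-- From a binary `Mrow = 1` witness to a single cover predicate. -/
lemma mrow_scov {a b c t : ℝ} (hb : 0 < b) {x : ℤ → ℝ} (hx : ∀ k, x k = 0 ∨ x k = 1)
    (h : ∀ j, Mrow a b c t x j = 1) : SCov a b c t (fun k => x k = 1) := by
  intro j
  obtain ⟨k, ⟨hw, hk⟩, huniq⟩ := (mrow_eq_one_iff a b c t hb x hx j).mp (h j)
  exact ⟨k, ⟨hk, hw⟩, fun k' ⟨hk', hw'⟩ => huniq k' ⟨hw', hk'⟩⟩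

/-- Shift identity for `Mrow`. -/
lemma mrow_shift (a b c t : ℝ) (x : ℤ → ℝ) (m j : ℤ) :
    Mrow a b c (t + (m:ℝ) * b) x j = Mrow a b c t (fun k => x (k - m)) j := by
  unfold Mrow
  rw [← Equiv.tsum_eq (Equiv.addRight m) (fun k => chiIco c (t - (j:ℝ)*a + (k:ℝ)*b) * x (k - m))]
  apply tsum_congr
  intro k
  simp only [Equiv.coe_addRight, add_sub_cancel_right]
  congr 1
  push_cast
  ring_nf

open Classical in
lemma GH.dcov_ind {a b c c₀ : ℝ} {q : ℤ} (H : GH a b c c₀ q) {t : ℝ} {Λ : ℤ → Prop}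
    {j k₁ k₂ : ℤ} (hlt : k₁ < k₂) (h1 : Λ k₁) (w1 : Win a b c t j k₁)
    (w2 : Win a b c t j k₂)
    (huniq : ∀ k, Λ k → Win a b c t j k → k = k₁ ∨ k = k₂) :
    indF Λ k₂ = indF Λ k₁ + 1 := by
  have hcard : (Finset.Ico k₁ k₂).filter Λ = {k₁} := by
    ext k
    simp only [Finset.mem_filter, Finset.mem_Ico, Finset.mem_singleton]
    constructor
    · rintro ⟨⟨hk1, hk2⟩, hk⟩
      rcases huniq k hk (H.win_convex w1 w2 hk1 hk2.le) with h | h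
      · exact h
      · omega
    · rintro rfl
      exact ⟨⟨le_rfl, hlt⟩, h1⟩
  rw [indF_interval Λ hlt.le, hcard]
  simp

lemma mrow_summable {a b c t : ℝ} (hb : 0 < b) (y : ℤ → ℝ) (j : ℤ) :
    Summable (fun k : ℤ => chiIco c (t - (j:ℝ)*a + (k:ℝ)*b) * y k) := by
  apply summable_of_ne_finset_zero
    (s := Finset.Icc ⌈((j:ℝ)*a - t)/b⌉ ⌊(((j:ℝ)*a - t) + c)/b⌋)
  intro k hk
  have hnw : ¬ Win a b c t j k := fun hw => hk (win_mem_Icc hb hw)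
  have : chiIco c (t - (j:ℝ)*a + (k:ℝ)*b) = 0 := by
    unfold chiIco
    rw [if_neg]
    exact fun hcon => hnw ⟨hcon.1, hcon.2⟩
  rw [this, zero_mul]

lemma mrow_add {a b c t : ℝ} (hb : 0 < b) (y z : ℤ → ℝ) (j : ℤ) :
    Mrow a b c t (fun k => y k + z k) j = Mrow a b c t y j + Mrow a b c t z j := by
  unfold Mrow
  rw [← Summable.tsum_add (mrow_summable hb y j) (mrow_summable hb z j)]
  apply tsum_congr
  intro k
  ring

lemma scov_mrow' {a b c t : ℝ} (hb : 0 < b) {P : ℤ → Prop} (hP : SCov a b c t P)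
    {x : ℤ → ℝ} (hxbin : ∀ k, x k = 0 ∨ x k = 1) (hiff : ∀ k, x k = 1 ↔ P k) (j : ℤ) :
    Mrow a b c t x j = 1 := by
  rw [mrow_eq_one_iff a b c t hb x hxbin j]
  obtain ⟨k, ⟨hk, hw⟩, huniq⟩ := hP j
  exact ⟨k, ⟨hw, (hiff k).2 hk⟩, fun k' ⟨hw', hx'⟩ => huniq k' ⟨(hiff k').1 hx', hw'⟩⟩

lemma sset_of_scov {a b c t : ℝ} (hb : 0 < b) {P : ℤ → Prop} (hP : SCov a b c t P)
    (h0 : P 0) : t ∈ Sset a b c := by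
  classical
  refine ⟨fun k => if P k then (1:ℝ) else 0, fun k => ?_, ?_,
    fun j => scov_mrow' hb hP (fun k => ?_) (fun k => ?_) j⟩
  · by_cases h : P k <;> simp [h]
  · show (if P 0 then (1:ℝ) else 0) = 1
    rw [if_pos h0]
  · by_cases h : P k <;> simp [h]
  · by_cases h : P k <;> simp [h]

lemma sset_shift_of_scov {a b c t : ℝ} (hb : 0 < b) {P : ℤ → Prop} (hP : SCov a b c t P)
    {m : ℤ} (hm : P m) : (t + (m:ℝ) * b) ∈ Sset a b c := by
  classical
  refine ⟨fun k => if P (k + m) then (1:ℝ) else 0, fun k => ?_, ?_, fun j => ?_⟩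
  · by_cases h : P (k + m) <;> simp [h]
  · show (if P (0 + m) then (1:ℝ) else 0) = 1
    rw [zero_add, if_pos hm]
  · rw [mrow_shift a b c t _ m j]
    apply scov_mrow' hb hP (fun k => ?_) (fun k => ?_)
    · show (if P (k - m + m) then (1:ℝ) else 0) = 0 ∨ (if P (k - m + m) then (1:ℝ) else 0) = 1
      have e : k - m + m = k := by ring
      rw [e]
      by_cases h : P k <;> simp [h]
    · show (if P (k - m + m) then (1:ℝ) else 0) = 1 ↔ P k
      have e : k - m + m = k := by ring
      rw [e]
      by_cases h : P k <;> simp [h]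


/-- Theorem `dabcsabc`: with `c₀ = c − ⌊c/b⌋·b` and `b − a < c₀ < a`,
`D_{a,b,c} = (S_{a,b,c} ∩ ([0, c₀+a−b) + aℤ) ∩ (S_{a,b,c} − ⌊c/b⌋b))
∪ (S_{a,b,c} ∩ ⋃_{λ∈bℤ, b ≤ λ ≤ (⌊c/b⌋−1)b} (S_{a,b,c} − λ))`. -/
theorem D_from_S_set_operations (a b c c₀ : ℝ)
    (ha : 0 < a) (hab : a < b) (hbc : b < c)
    (hc0 : c₀ = c - (⌊c / b⌋ : ℝ) * b) (h1 : b - a < c₀) (h2 : c₀ < a) :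
    Dset a b c =
      (Sset a b c ∩ perSet a (Set.Ico 0 (c₀ + a - b)) ∩
        ((fun s => s - (⌊c / b⌋ : ℝ) * b) '' Sset a b c)) ∪
      (Sset a b c ∩
        ⋃ (k : ℤ) (_ : 1 ≤ k ∧ k ≤ ⌊c / b⌋ - 1),
          (fun s => s - (k : ℝ) * b) '' Sset a b c) := by
  have hb : 0 < b := ha.trans hab
  set q : ℤ := ⌊c / b⌋ with hqdef
  have hq1 : 1 ≤ q := by
    rw [hqdef]
    exact Int.le_floor.2 (by rw [show ((1:ℤ):ℝ) = 1 from by norm_num, le_div_iff₀ hb]; linarith)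
  have H : GH a b c c₀ q := ⟨ha, hab, hq1, by rw [hc0]; ring, h1, h2⟩
  have hqR : (1:ℝ) ≤ (q:ℝ) := H.hqR
  have hc0pos := H.hc0
  have hcq : c = (q:ℝ) * b + c₀ := H.hc
  have hqb : b ≤ (q:ℝ) * b := by nlinarith
  ext t
  constructor
  · intro hD
    obtain ⟨x, hxbin, hx0, hx2⟩ := hD
    have hDC : DCov a b c t (fun k => x k = 1) := by
      intro j
      obtain ⟨k₁, k₂, hlt, ⟨ww1, hh1⟩, ⟨ww2, hh2⟩, hu⟩ :=
        (mrow_eq_two_iff a b c t hb x hxbin j).mp (hx2 j)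
      exact ⟨k₁, k₂, hlt, ⟨hh1, ww1⟩, ⟨hh2, ww2⟩, fun k hk hw => hu k hw hk⟩
    obtain ⟨hSCe, hSCo⟩ := H.dcov_parity hDC
    have htS : t ∈ Sset a b c :=
      sset_of_scov hb hSCe ⟨hx0, by rw [indF_zero]; exact Even.zero⟩
    -- the distinguished window around 0
    set j₀ : ℤ := ⌊t / a⌋ with hj₀def
    have hs1 : (j₀:ℝ) * a - t ≤ 0 := by
      have h1 := Int.floor_le (t / a)
      have h3 := mul_le_mul_of_nonneg_right h1 ha.le
      rw [div_mul_cancel₀ _ ha.ne'] at h3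
      linarith
    have hs2 : -a < (j₀:ℝ) * a - t := by
      have h1 := Int.sub_one_lt_floor (t / a)
      have h3 := mul_lt_mul_of_pos_right h1 ha
      rw [sub_mul, div_mul_cancel₀ _ ha.ne', one_mul] at h3
      linarith
    obtain ⟨k₁, k₂, hlt, ⟨hxk₁, w1⟩, ⟨hxk₂, w2⟩, hu⟩ := hDC j₀
    have w0 : Win a b c t j₀ 0 := by
      constructor
      · push_cast
        linarith
      · push_cast
        linarith [hc0pos, hqb]
    have hk₁0 : k₁ = 0 := by
      rcases hu 0 hx0 w0 with h | h
      · exact h.symm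
      · exfalso
        have hk1neg : k₁ ≤ -1 := by omega
        have hcast : ((k₁:ℤ):ℝ) ≤ -1 := by exact_mod_cast hk1neg
        have hkb : (k₁:ℝ) * b ≤ -b := by nlinarith
        have := w1.1
        linarith
    subst hk₁0
    have hm1 : 1 ≤ k₂ := by omega
    have hmq : k₂ ≤ q := by
      by_contra hcon
      push_neg at hcon
      have hcast : ((q:ℝ) + 1) ≤ (k₂:ℝ) := by exact_mod_cast hcon
      have hkb : ((q:ℝ) + 1) * b ≤ (k₂:ℝ) * b := by nlinarith
      have := w2.2
      nlinarith [hs1, H.hc0b]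
    have hind2 : indF (fun k : ℤ => x k = 1) k₂ = 1 := by
      have hi := H.dcov_ind hlt hx0 w1 w2 hu
      rw [indF_zero] at hi
      omega
    have hzPk₂ : (fun k : ℤ => x k = 1 ∧ ¬Even (indF (fun k : ℤ => x k = 1) k)) k₂ :=
      ⟨hxk₂, by rw [hind2]; decide⟩
    have htmS : (t + (k₂:ℝ) * b) ∈ Sset a b c := sset_shift_of_scov hb hSCo hzPk₂
    rcases eq_or_lt_of_le hmq with hmq' | hmlt
    · -- k₂ = q : left branch
      left
      refine ⟨⟨htS, ?_⟩, ?_⟩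
      · -- perSet membership via j₀
        obtain ⟨l₁, l₂, hll, ⟨hxl₁, v1⟩, ⟨hxl₂, v2⟩, hv⟩ := hDC (j₀ + 1)
        have hstep1 : t - (j₀:ℝ) * a < c₀ := by
          have h3 := w2.2
          have hc2 : (k₂:ℝ) = (q:ℝ) := by exact_mod_cast hmq'
          rw [hc2] at h3
          linarith [hcq]
        have hpos : ∀ k : ℤ, Win a b c t (j₀ + 1) k → 1 ≤ k := by
          intro k hk
          by_contra hcon
          push_neg at hcon
          have hcast : (k:ℝ) ≤ 0 := by exact_mod_cast (by omega : k ≤ 0)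
          have hkb : (k:ℝ) * b ≤ 0 := by nlinarith
          have h3 := hk.1
          push_cast at h3
          linarith [H.h2]
        have hmid : ∀ k : ℤ, x k = 1 → 0 < k → k < q → False := by
          intro k hk h0k hkq
          have hw : Win a b c t j₀ k := H.win_convex w1 w2 (by omega) (by omega)
          rcases hu k hk hw with h | h <;> omega
        have wq1 : Win a b c t (j₀ + 1) q := by
          constructor
          · push_cast
            linarith [hs1, hqb]
          · push_cast
            linarith [hstep1, hcq]
        have hq_in := hv q (by rw [← hmq']; exact hxk₂) wq1
        have hles : t - (j₀:ℝ) * a < c₀ + a - b := by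
          rcases hq_in with h | h
          · -- q = l₁, the companion l₂ is ≥ q+1
            have hl₂q : q + 1 ≤ l₂ := by omega
            have hcast : ((q:ℝ) + 1) ≤ (l₂:ℝ) := by exact_mod_cast hl₂q
            have hkb : ((q:ℝ) + 1) * b ≤ (l₂:ℝ) * b := by nlinarith
            have h3 := v2.2
            push_cast at h3
            linarith [hcq]
          · exfalso
            exact hmid l₁ hxl₁ (by linarith [hpos l₁ v1]) (by omega)
        exact ⟨j₀, by rw [Set.mem_Ico]; exact ⟨by linarith, hles⟩⟩
      · refine ⟨t + (q:ℝ) * b, ?_, ?_⟩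
        · rw [hmq'] at htmS
          exact htmS
        · show t + (q:ℝ) * b - (q:ℝ) * b = t
          ring
    · -- k₂ ≤ q - 1 : right branch
      right
      refine ⟨htS, ?_⟩
      rw [Set.mem_iUnion]
      refine ⟨k₂, Set.mem_iUnion.2 ⟨⟨hm1, by omega⟩, t + (k₂:ℝ) * b, htmS, ?_⟩⟩
      show t + (k₂:ℝ) * b - (k₂:ℝ) * b = t
      ring
  · intro h
    rw [Set.mem_union] at h
    obtain ⟨m, hm1, hmq, htS, htmS, hextra⟩ :
        ∃ m : ℤ, 1 ≤ m ∧ m ≤ q ∧ t ∈ Sset a b c ∧ (t + (m:ℝ)*b) ∈ Sset a b c ∧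
          (m = q → ∃ k : ℤ, t - (k:ℝ)*a ∈ Set.Ico (0:ℝ) (c₀ + a - b)) := by
      rcases h with ⟨⟨htS, hper⟩, himg⟩ | ⟨htS, hUn⟩
      · obtain ⟨s, hsS, hs⟩ := himg
        simp only at hs
        refine ⟨q, hq1, le_rfl, htS, ?_, fun _ => hper⟩
        have hseq : s = t + (q:ℝ)*b := by linarith
        rwa [← hseq]
      · rw [Set.mem_iUnion] at hUn
        obtain ⟨m, hUn⟩ := hUn
        rw [Set.mem_iUnion] at hUn
        obtain ⟨⟨hm1, hm2⟩, hmem⟩ := hUn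
        obtain ⟨s, hsS, hs⟩ := hmem
        simp only at hs
        refine ⟨m, hm1, by omega, htS, ?_, fun hcp => absurd hcp (by omega)⟩
        have hseq : s = t + (m:ℝ)*b := by linarith
        rwa [← hseq]
    obtain ⟨y, hybin, hy0, hy1⟩ := htS
    obtain ⟨w, hwbin, hw0, hw1⟩ := htmS
    have hzbin : ∀ k : ℤ, w (k - m) = 0 ∨ w (k - m) = 1 := fun k => hwbin (k - m)
    have hzm : w (m - m) = 1 := by rw [sub_self]; exact hw0
    have hz1 : ∀ j, Mrow a b c t (fun k => w (k - m)) j = 1 := fun j => by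
      rw [← mrow_shift a b c t w m j]
      exact hw1 j
    have hSy := mrow_scov hb hybin hy1
    have hSz := mrow_scov hb (fun k => hzbin k) hz1
    have hdis : ∀ k, ¬(y k = 1 ∧ w (k - m) = 1) := by
      rintro p ⟨hyp, hzp⟩
      have hz0 : w (0 - m) = 1 := H.scov_share hSy hSz hyp hzp hy0
      have hgap : (0:ℤ) + q ≤ m := H.scov_gap hSz hz0 hzm (by omega)
      have hmq' : m = q := by omega
      obtain ⟨j₁, hj₁⟩ := hextra hmq'
      rw [Set.mem_Ico] at hj₁
      have w0 : Win a b c t j₁ 0 := by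
        constructor
        · push_cast
          linarith [hj₁.1]
        · push_cast
          linarith [hj₁.2]
      have wq : Win a b c t j₁ q := by
        constructor
        · push_cast
          linarith [hj₁.1]
        · push_cast
          linarith [hj₁.2]
      have hzq : w (q - m) = 1 := by rw [← hmq']; exact hzm
      have := (hSz j₁).unique ⟨hz0, w0⟩ ⟨hzq, wq⟩
      omega
    refine ⟨fun k => y k + w (k - m), ?_, ?_, ?_⟩
    · intro k
      rcases hybin k with hh1 | hh1 <;> rcases hzbin k with hh2 | hh2
      · left; show y k + w (k - m) = 0; rw [hh1, hh2]; ring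
      · right; show y k + w (k - m) = 1; rw [hh1, hh2]; ring
      · right; show y k + w (k - m) = 1; rw [hh1, hh2]; ring
      · exact absurd ⟨hh1, hh2⟩ (hdis k)
    · have hz0' : w (0 - m) = 0 := by
        rcases hzbin 0 with hh | hh
        · exact hh
        · exact absurd ⟨hy0, hh⟩ (hdis 0)
      show y 0 + w (0 - m) = 1
      rw [hy0, hz0']; ring
    · intro j
      rw [mrow_add hb y (fun k => w (k - m)) j, hy1 j, hz1 j]
      norm_num
end

section
/- Let (a,b,c) be a triple of positive real numbers with a < b < c and b − a < c₀ < a, where c₀ := c − ⌊c/b⌋·b. Then t ∈ S_{a,b,c} if and only if for every integer n ≥ 0, neither (R_{a,b,c})ⁿ(t) nor (R̃_{a,b,c})ⁿ(t) belongs to the union ([c₀+a−b, c₀) + aℤ) ∪ ([c−c₀, c+b−c₀−a) + aℤ) of the black holes of R_{a,b,c} and R̃_{a,b,c}. -/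
open MeasureTheory Set

/-- `memI a y l r` : `y ∈ [l,r) + aℤ`. -/
def memI (a y l r : ℝ) : Prop := ∃ k : ℤ, l ≤ y - (k:ℝ)*a ∧ y - (k:ℝ)*a < r

lemma memI_exists (a : ℝ) (ha : 0 < a) (L y : ℝ) :
    ∃ k : ℤ, L ≤ y - (k:ℝ)*a ∧ y - (k:ℝ)*a < L + a := by
  refine ⟨⌊(y - L)/a⌋, ?_, ?_⟩
  · have := Int.floor_le ((y - L)/a)
    have h := mul_le_mul_of_nonneg_right this ha.le
    rw [div_mul_cancel₀ _ ha.ne'] at h; linarith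
  · have := Int.lt_floor_add_one ((y - L)/a)
    have h := mul_lt_mul_of_pos_right this ha
    rw [div_mul_cancel₀ _ ha.ne'] at h; push_cast at h ⊢; nlinarith

lemma memI_k_unique (a : ℝ) (ha : 0 < a) {L y : ℝ} {k k' : ℤ}
    (h : L ≤ y - (k:ℝ)*a ∧ y - (k:ℝ)*a < L + a)
    (h' : L ≤ y - (k':ℝ)*a ∧ y - (k':ℝ)*a < L + a) : k = k' := by
  by_contra hne
  have h1 : ((k - k' : ℤ) : ℝ) * a < a ∧ -a < ((k - k' : ℤ) : ℝ) * a := by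
    push_cast; constructor <;> nlinarith [h.1, h.2, h'.1, h'.2]
  rcases lt_or_gt_of_ne (sub_ne_zero.mpr hne) with hlt | hgt
  · have : (k - k' : ℤ) ≤ -1 := by omega
    have : ((k - k' : ℤ) : ℝ) ≤ -1 := by exact_mod_cast this
    nlinarith [h1.2]
  · have : (1 : ℤ) ≤ k - k' := by omega
    have : (1 : ℝ) ≤ ((k - k' : ℤ) : ℝ) := by exact_mod_cast this
    nlinarith [h1.1]

/-- If `[l₁,r₁)` and `[l₂,r₂)` are disjoint subintervals of a window `[L, L+a)`,
then `memI` of both is impossible. -/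
lemma memI_disj (a : ℝ) (ha : 0 < a) {L l₁ r₁ l₂ r₂ y : ℝ}
    (hL : L ≤ l₁) (hr₁ : r₁ ≤ l₂) (hr₂ : r₂ ≤ L + a) :
    memI a y l₁ r₁ → memI a y l₂ r₂ → False := by
  rintro ⟨k, hk1, hk2⟩ ⟨k', hk1', hk2'⟩
  have hkk : k = k' := memI_k_unique a ha
    ⟨le_trans hL hk1, lt_of_lt_of_le hk2 (le_trans hr₁ (by linarith))⟩
    ⟨le_trans (by linarith : L ≤ l₂) hk1', lt_of_lt_of_le hk2' hr₂⟩
  subst hkk; linarith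

lemma memI_cover (a : ℝ) (ha : 0 < a) {L m₁ m₂ : ℝ} (h1 : L ≤ m₁) (h2 : m₁ ≤ m₂)
    (h3 : m₂ ≤ L + a) (y : ℝ) :
    memI a y L m₁ ∨ memI a y m₁ m₂ ∨ memI a y m₂ (L + a) := by
  obtain ⟨k, hk1, hk2⟩ := memI_exists a ha L y
  rcases lt_or_ge (y - (k:ℝ)*a) m₁ with h | h
  · exact Or.inl ⟨k, hk1, h⟩
  rcases lt_or_ge (y - (k:ℝ)*a) m₂ with h' | h'
  · exact Or.inr (Or.inl ⟨k, h, h'⟩)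
  · exact Or.inr (Or.inr ⟨k, h', hk2⟩)

lemma memI_shift (a y l r v : ℝ) : memI a (y + v) (l + v) (r + v) ↔ memI a y l r := by
  unfold memI
  constructor <;> rintro ⟨k, hk1, hk2⟩ <;> exact ⟨k, by linarith, by linarith⟩

lemma memI_per (a y l r : ℝ) : memI a y (l + a) (r + a) ↔ memI a y l r := by
  constructor <;> rintro ⟨k, hk1, hk2⟩
  · exact ⟨k + 1, by push_cast; linarith, by push_cast; linarith⟩
  · exact ⟨k - 1, by push_cast; linarith, by push_cast; linarith⟩

/-! ### Window lemmas -/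

lemma win_q (b c c₀ : ℝ) (q : ℤ) (hb : 0 < b) (hc : c = q*b + c₀) (hc₀ : 0 < c₀)
    (hc₀b : c₀ < b) {u : ℝ} (hu : c₀ ≤ u) (hu' : u < b) (d : ℤ) :
    (0 ≤ u + (d:ℝ)*b ∧ u + (d:ℝ)*b < c) ↔ (0 ≤ d ∧ d ≤ q - 1) := by
  constructor
  · rintro ⟨g1, g2⟩
    constructor
    · by_contra h
      have hd : d ≤ -1 := by omega
      have hd' : (d:ℝ) ≤ -1 := by exact_mod_cast hd
      nlinarith
    · by_contra h
      have hd : q ≤ d := by omega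
      have hd' : (q:ℝ) ≤ (d:ℝ) := by exact_mod_cast hd
      nlinarith
  · rintro ⟨g1, g2⟩
    have g1' : (0:ℝ) ≤ (d:ℝ) := by exact_mod_cast g1
    have g2' : (d:ℝ) ≤ (q:ℝ) - 1 := by
      have : (d:ℝ) ≤ ((q - 1 : ℤ) : ℝ) := by exact_mod_cast g2
      push_cast at this; linarith
    constructor
    · nlinarith
    · nlinarith

lemma win_q1 (b c c₀ : ℝ) (q : ℤ) (hb : 0 < b) (hc : c = q*b + c₀) (hc₀ : 0 ≤ c₀)
    (hc₀b : c₀ < b) {u : ℝ} (hu : 0 ≤ u) (hu' : u < c₀) (d : ℤ) :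
    (0 ≤ u + (d:ℝ)*b ∧ u + (d:ℝ)*b < c) ↔ (0 ≤ d ∧ d ≤ q) := by
  constructor
  · rintro ⟨g1, g2⟩
    constructor
    · by_contra h
      have hd : d ≤ -1 := by omega
      have hd' : (d:ℝ) ≤ -1 := by exact_mod_cast hd
      nlinarith
    · by_contra h
      have hd : q + 1 ≤ d := by omega
      have hd' : (q:ℝ) + 1 ≤ (d:ℝ) := by exact_mod_cast hd
      nlinarith
  · rintro ⟨g1, g2⟩
    have g1' : (0:ℝ) ≤ (d:ℝ) := by exact_mod_cast g1
    have g2' : (d:ℝ) ≤ (q:ℝ) := by exact_mod_cast g2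
    constructor
    · nlinarith
    · nlinarith

/-! ### Row value characterization -/

lemma mrow_one_iff (a b c t : ℝ) (hb : 0 < b) (x : ℤ → ℝ)
    (hx : ∀ k, x k = 0 ∨ x k = 1) (j : ℤ) :
    Mrow a b c t x j = 1 ↔
      ∃! m : ℤ, (0 ≤ t - (j:ℝ)*a + (m:ℝ)*b ∧ t - (j:ℝ)*a + (m:ℝ)*b < c) ∧ x m = 1 := by
  classical
  set f : ℤ → ℝ := fun k => chiIco c (t - (j:ℝ)*a + (k:ℝ)*b) * x k with hf
  have hchi : ∀ k : ℤ, (0 ≤ t - (j:ℝ)*a + (k:ℝ)*b ∧ t - (j:ℝ)*a + (k:ℝ)*b < c) →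
      chiIco c (t - (j:ℝ)*a + (k:ℝ)*b) = 1 := by
    intro k hk; simp only [chiIco, if_pos hk]
  have hchi' : ∀ k : ℤ, ¬(0 ≤ t - (j:ℝ)*a + (k:ℝ)*b ∧ t - (j:ℝ)*a + (k:ℝ)*b < c) →
      chiIco c (t - (j:ℝ)*a + (k:ℝ)*b) = 0 := by
    intro k hk; simp only [chiIco, if_neg hk]
  have hkey : ∀ k : ℤ, f k ≠ 0 →
      (0 ≤ t - (j:ℝ)*a + (k:ℝ)*b ∧ t - (j:ℝ)*a + (k:ℝ)*b < c) ∧ x k = 1 := by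
    intro k hk
    rcases mul_ne_zero_iff.mp hk with ⟨h1, h2⟩
    by_cases hc' : (0 ≤ t - (j:ℝ)*a + (k:ℝ)*b ∧ t - (j:ℝ)*a + (k:ℝ)*b < c)
    · exact ⟨hc', (hx k).resolve_left h2⟩
    · exact absurd (hchi' k hc') h1
  set s : Finset ℤ := Finset.Icc ⌈((j:ℝ)*a - t)/b⌉ ⌊((j:ℝ)*a - t + c)/b⌋ with hs
  have hsupp : ∀ k ∉ s, f k = 0 := by
    intro k hk
    by_contra hne
    obtain ⟨⟨w1, w2⟩, _⟩ := hkey k hne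
    apply hk
    rw [hs, Finset.mem_Icc]
    constructor
    · rw [Int.ceil_le, div_le_iff₀ hb]; linarith
    · rw [Int.le_floor, le_div_iff₀ hb]; linarith
  have hf01 : ∀ k, f k = 0 ∨ f k = 1 := by
    intro k
    by_cases hc' : (0 ≤ t - (j:ℝ)*a + (k:ℝ)*b ∧ t - (j:ℝ)*a + (k:ℝ)*b < c)
    · rcases hx k with h | h
      · left; rw [hf]; simp [h]
      · right; rw [hf]; simp only [hchi k hc', h, one_mul]
    · left; rw [hf]; simp [hchi' k hc']
  have hfnn : ∀ k, 0 ≤ f k := by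
    intro k; rcases hf01 k with h | h <;> rw [h]; norm_num
  have hMrow : Mrow a b c t x j = ∑ k ∈ s, f k := tsum_eq_sum hsupp
  constructor
  · intro h
    rw [hMrow] at h
    have hne : ∑ k ∈ s, f k ≠ 0 := by rw [h]; norm_num
    obtain ⟨m, hms, hm⟩ := Finset.exists_ne_zero_of_sum_ne_zero hne
    obtain ⟨hwin, hxm⟩ := hkey m hm
    refine ⟨m, ⟨hwin, hxm⟩, ?_⟩
    intro m' ⟨hwin', hxm'⟩
    by_contra hne'
    have hfm : f m = 1 := by rw [hf]; simp only [hchi m hwin, hxm, one_mul]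
    have hfm' : f m' = 1 := by rw [hf]; simp only [hchi m' hwin', hxm', one_mul]
    have hm's : m' ∈ s := by
      by_contra hn; rw [hsupp m' hn] at hfm'; norm_num at hfm'
    have hsub : ({m', m} : Finset ℤ) ⊆ s := by
      intro z hz; rcases Finset.mem_insert.mp hz with h' | h'
      · exact h' ▸ hm's
      · exact (Finset.mem_singleton.mp h') ▸ hms
    have h2le : ∑ k ∈ ({m', m} : Finset ℤ), f k ≤ ∑ k ∈ s, f k :=
      Finset.sum_le_sum_of_subset_of_nonneg hsub (fun i _ _ => hfnn i)
    rw [Finset.sum_pair hne'] at h2le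
    rw [h, hfm, hfm'] at h2le
    linarith
  · rintro ⟨m, ⟨hwin, hxm⟩, huniq⟩
    have : Mrow a b c t x j = ∑ k ∈ ({m} : Finset ℤ), f k := by
      apply tsum_eq_sum
      intro k hk
      have hkm : k ≠ m := by simpa using hk
      by_contra hne
      obtain ⟨hwin', hxk⟩ := hkey k hne
      exact hkm (huniq k ⟨hwin', hxk⟩)
    rw [this, Finset.sum_singleton, hf]
    simp only [hchi m hwin, hxm, one_mul]

/-! ### Window shapes -/

lemma win_shape_q (a b c c₀ t : ℝ) (q : ℤ) (hb : 0 < b) (hc : c = q*b + c₀)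
    (hc₀ : 0 < c₀) (hc₀b : c₀ < b) {j k : ℤ}
    (hv : c₀ ≤ t + (k:ℝ)*b - (j:ℝ)*a) (hv' : t + (k:ℝ)*b - (j:ℝ)*a < b) (m : ℤ) :
    (0 ≤ t - (j:ℝ)*a + (m:ℝ)*b ∧ t - (j:ℝ)*a + (m:ℝ)*b < c) ↔ (k ≤ m ∧ m ≤ k + q - 1) := by
  have h := win_q b c c₀ q hb hc hc₀ hc₀b hv hv' (m - k)
  have e : t - (j:ℝ)*a + (m:ℝ)*b = (t + (k:ℝ)*b - (j:ℝ)*a) + ((m - k : ℤ):ℝ)*b := by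
    push_cast; ring
  rw [e, h]; omega

lemma win_shape_q1 (a b c c₀ t : ℝ) (q : ℤ) (hb : 0 < b) (hc : c = q*b + c₀)
    (hc₀ : 0 ≤ c₀) (hc₀b : c₀ < b) {j k : ℤ}
    (hv : 0 ≤ t + (k:ℝ)*b - (j:ℝ)*a) (hv' : t + (k:ℝ)*b - (j:ℝ)*a < c₀) (m : ℤ) :
    (0 ≤ t - (j:ℝ)*a + (m:ℝ)*b ∧ t - (j:ℝ)*a + (m:ℝ)*b < c) ↔ (k ≤ m ∧ m ≤ k + q) := by
  have h := win_q1 b c c₀ q hb hc hc₀ hc₀b hv hv' (m - k)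
  have e : t - (j:ℝ)*a + (m:ℝ)*b = (t + (k:ℝ)*b - (j:ℝ)*a) + ((m - k : ℤ):ℝ)*b := by
    push_cast; ring
  rw [e, h]; omega

/-! ### Forward / backward step lemmas -/

section Steps

variable (a b c c₀ t : ℝ) (q : ℤ) (P : ℤ → Prop)

variable (ha : 0 < a) (hab : a < b) (h1 : b - a < c₀) (h2 : c₀ < a)
  (hq1 : 1 ≤ q) (hc : c = q*b + c₀)
  (hEx : ∀ j : ℤ, ∃! m : ℤ,
    (0 ≤ t - (j:ℝ)*a + (m:ℝ)*b ∧ t - (j:ℝ)*a + (m:ℝ)*b < c) ∧ P m)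

include ha hab h1 h2 hq1 hc hEx

lemma stepA {k : ℤ} (hP : P k) (hA : memI a (t + (k:ℝ)*b) c₀ a) : P (k + q) := by
  have hb : 0 < b := ha.trans hab
  have hc₀ : 0 < c₀ := by linarith
  have hc₀b : c₀ < b := by linarith
  obtain ⟨jj, hj1, hj2⟩ := hA
  have W1 := fun m => win_shape_q a b c c₀ t q hb hc hc₀ hc₀b (j := jj) (k := k)
    (by linarith) (by linarith) m
  obtain ⟨m₀, hm₀, hun₀⟩ := hEx jj
  have hk0 : k = m₀ := hun₀ k ⟨(W1 k).mpr ⟨le_refl _, by omega⟩, hP⟩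
  have hfree : ∀ m : ℤ, k+1 ≤ m → m ≤ k+q-1 → ¬ P m := by
    intro m hm1 hm2 hPm
    have := hun₀ m ⟨(W1 m).mpr ⟨by omega, hm2⟩, hPm⟩
    omega
  have hv2 : c₀ ≤ t + ((k+1 : ℤ):ℝ)*b - ((jj+1 : ℤ):ℝ)*a := by push_cast; linarith
  have hv2' : t + ((k+1 : ℤ):ℝ)*b - ((jj+1 : ℤ):ℝ)*a < b := by push_cast; linarith
  have W2 := fun m => win_shape_q a b c c₀ t q hb hc hc₀ hc₀b (j := jj+1) (k := k+1) hv2 hv2' m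
  obtain ⟨m₁, ⟨hm₁w, hm₁P⟩, _⟩ := hEx (jj+1)
  have hr : k+1 ≤ m₁ ∧ m₁ ≤ (k+1) + q - 1 := (W2 m₁).mp hm₁w
  have : m₁ = k + q := by
    by_contra h
    exact hfree m₁ hr.1 (by omega) hm₁P
  exact this ▸ hm₁P

lemma stepB {k : ℤ} (hP : P k) (hB : memI a (t + (k:ℝ)*b) 0 (c₀+a-b)) : P (k + q + 1) := by
  have hb : 0 < b := ha.trans hab
  have hc₀ : 0 < c₀ := by linarith
  have hc₀b : c₀ < b := by linarith
  obtain ⟨jj, hj1, hj2⟩ := hB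
  have W1 := fun m => win_shape_q1 a b c c₀ t q hb hc hc₀.le hc₀b (j := jj) (k := k)
    (by linarith) (by linarith) m
  obtain ⟨m₀, hm₀, hun₀⟩ := hEx jj
  have hk0 : k = m₀ := hun₀ k ⟨(W1 k).mpr ⟨le_refl _, by omega⟩, hP⟩
  have hfree : ∀ m : ℤ, k+1 ≤ m → m ≤ k+q → ¬ P m := by
    intro m hm1 hm2 hPm
    have := hun₀ m ⟨(W1 m).mpr ⟨by omega, hm2⟩, hPm⟩
    omega
  have hv2 : 0 ≤ t + ((k+1 : ℤ):ℝ)*b - ((jj+1 : ℤ):ℝ)*a := by push_cast; linarith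
  have hv2' : t + ((k+1 : ℤ):ℝ)*b - ((jj+1 : ℤ):ℝ)*a < c₀ := by push_cast; linarith
  have W2 := fun m => win_shape_q1 a b c c₀ t q hb hc hc₀.le hc₀b (j := jj+1) (k := k+1) hv2 hv2' m
  obtain ⟨m₁, ⟨hm₁w, hm₁P⟩, _⟩ := hEx (jj+1)
  have hr : k+1 ≤ m₁ ∧ m₁ ≤ (k+1) + q := (W2 m₁).mp hm₁w
  have : m₁ = k + q + 1 := by
    by_contra h
    exact hfree m₁ hr.1 (by omega) hm₁P
  exact this ▸ hm₁P

lemma noH1 {k : ℤ} (hP : P k) : ¬ memI a (t + (k:ℝ)*b) (c₀+a-b) c₀ := by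
  have hb : 0 < b := ha.trans hab
  have hc₀ : 0 < c₀ := by linarith
  have hc₀b : c₀ < b := by linarith
  rintro ⟨jj, hj1, hj2⟩
  have W1 := fun m => win_shape_q1 a b c c₀ t q hb hc hc₀.le hc₀b (j := jj) (k := k)
    (by linarith) (by linarith) m
  obtain ⟨m₀, hm₀, hun₀⟩ := hEx jj
  have hk0 : k = m₀ := hun₀ k ⟨(W1 k).mpr ⟨le_refl _, by omega⟩, hP⟩
  have hfree : ∀ m : ℤ, k+1 ≤ m → m ≤ k+q → ¬ P m := by
    intro m hm1 hm2 hPm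
    have := hun₀ m ⟨(W1 m).mpr ⟨by omega, hm2⟩, hPm⟩
    omega
  have hv2 : c₀ ≤ t + ((k+1 : ℤ):ℝ)*b - ((jj+1 : ℤ):ℝ)*a := by push_cast; linarith
  have hv2' : t + ((k+1 : ℤ):ℝ)*b - ((jj+1 : ℤ):ℝ)*a < b := by push_cast; linarith
  have W2 := fun m => win_shape_q a b c c₀ t q hb hc hc₀ hc₀b (j := jj+1) (k := k+1) hv2 hv2' m
  obtain ⟨m₁, ⟨hm₁w, hm₁P⟩, _⟩ := hEx (jj+1)
  have hr : k+1 ≤ m₁ ∧ m₁ ≤ (k+1) + q - 1 := (W2 m₁).mp hm₁w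
  exact hfree m₁ hr.1 (by omega) hm₁P

lemma backA {k : ℤ} (hP : P k) (hA : memI a (t + ((k:ℝ) - (q:ℝ))*b) c₀ a) : P (k - q) := by
  have hb : 0 < b := ha.trans hab
  have hc₀ : 0 < c₀ := by linarith
  have hc₀b : c₀ < b := by linarith
  obtain ⟨jj, hj1, hj2⟩ := hA
  have hv1 : c₀ ≤ t + ((k - q : ℤ):ℝ)*b - (jj:ℝ)*a := by push_cast at hj1 ⊢; linarith
  have hv1' : t + ((k - q : ℤ):ℝ)*b - (jj:ℝ)*a < b := by push_cast at hj2 ⊢; linarith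
  have W1 := fun m => win_shape_q a b c c₀ t q hb hc hc₀ hc₀b (j := jj) (k := k - q) hv1 hv1' m
  have hv2 : c₀ ≤ t + ((k-q+1 : ℤ):ℝ)*b - ((jj+1 : ℤ):ℝ)*a := by push_cast at hj1 ⊢; linarith
  have hv2' : t + ((k-q+1 : ℤ):ℝ)*b - ((jj+1 : ℤ):ℝ)*a < b := by push_cast at hj2 ⊢; linarith
  have W2 := fun m => win_shape_q a b c c₀ t q hb hc hc₀ hc₀b (j := jj+1) (k := k-q+1) hv2 hv2' m
  obtain ⟨m₁, hm₁, hun₁⟩ := hEx (jj+1)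
  have hk1 : k = m₁ := hun₁ k ⟨(W2 k).mpr ⟨by omega, by omega⟩, hP⟩
  have hfree : ∀ m : ℤ, k-q+1 ≤ m → m ≤ k-1 → ¬ P m := by
    intro m hm1' hm2' hPm
    have := hun₁ m ⟨(W2 m).mpr ⟨by omega, by omega⟩, hPm⟩
    omega
  obtain ⟨m₀, ⟨hm₀w, hm₀P⟩, _⟩ := hEx jj
  have hr : k - q ≤ m₀ ∧ m₀ ≤ (k - q) + q - 1 := (W1 m₀).mp hm₀w
  have : m₀ = k - q := by
    by_contra h
    exact hfree m₀ (by omega) (by omega) hm₀P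
  exact this ▸ hm₀P

lemma backB {k : ℤ} (hP : P k) (hB : memI a (t + ((k:ℝ) - (q:ℝ) - 1)*b) 0 (c₀+a-b)) :
    P (k - q - 1) := by
  have hb : 0 < b := ha.trans hab
  have hc₀ : 0 < c₀ := by linarith
  have hc₀b : c₀ < b := by linarith
  obtain ⟨jj, hj1, hj2⟩ := hB
  have hv1 : 0 ≤ t + ((k - q - 1 : ℤ):ℝ)*b - (jj:ℝ)*a := by push_cast at hj1 ⊢; linarith
  have hv1' : t + ((k - q - 1 : ℤ):ℝ)*b - (jj:ℝ)*a < c₀ := by push_cast at hj2 ⊢; linarith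
  have W1 := fun m => win_shape_q1 a b c c₀ t q hb hc hc₀.le hc₀b (j := jj) (k := k-q-1) hv1 hv1' m
  have hv2 : 0 ≤ t + ((k-q : ℤ):ℝ)*b - ((jj+1 : ℤ):ℝ)*a := by push_cast at hj1 ⊢; linarith
  have hv2' : t + ((k-q : ℤ):ℝ)*b - ((jj+1 : ℤ):ℝ)*a < c₀ := by push_cast at hj2 ⊢; linarith
  have W2 := fun m => win_shape_q1 a b c c₀ t q hb hc hc₀.le hc₀b (j := jj+1) (k := k-q) hv2 hv2' m
  obtain ⟨m₁, hm₁, hun₁⟩ := hEx (jj+1)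
  have hk1 : k = m₁ := hun₁ k ⟨(W2 k).mpr ⟨by omega, by omega⟩, hP⟩
  have hfree : ∀ m : ℤ, k-q ≤ m → m ≤ k-1 → ¬ P m := by
    intro m hm1' hm2' hPm
    have := hun₁ m ⟨(W2 m).mpr ⟨by omega, by omega⟩, hPm⟩
    omega
  obtain ⟨m₀, ⟨hm₀w, hm₀P⟩, _⟩ := hEx jj
  have hr : k - q - 1 ≤ m₀ ∧ m₀ ≤ (k - q - 1) + q := (W1 m₀).mp hm₀w
  have : m₀ = k - q - 1 := by
    by_contra h
    exact hfree m₀ (by omega) (by omega) hm₀P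
  exact this ▸ hm₀P

lemma noH2 {k : ℤ} (hP : P k) : ¬ memI a (t + (k:ℝ)*b) (c-c₀) (c+b-c₀-a) := by
  have hb : 0 < b := ha.trans hab
  have hc₀ : 0 < c₀ := by linarith
  have hc₀b : c₀ < b := by linarith
  have hqb : (q:ℝ)*b = c - c₀ := by linarith
  rintro ⟨jj, hj1, hj2⟩
  -- v := t + (k-q) b - jj a ∈ [0, b-a)
  have hv1 : 0 ≤ t + ((k - q : ℤ):ℝ)*b - (jj:ℝ)*a := by push_cast; linarith
  have hv1' : t + ((k - q : ℤ):ℝ)*b - (jj:ℝ)*a < c₀ := by push_cast; linarith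
  have W1 := fun m => win_shape_q1 a b c c₀ t q hb hc hc₀.le hc₀b (j := jj) (k := k-q) hv1 hv1' m
  obtain ⟨m₀, hm₀, hun₀⟩ := hEx jj
  have hk0 : k = m₀ := hun₀ k ⟨(W1 k).mpr ⟨by omega, by omega⟩, hP⟩
  have hfree : ∀ m : ℤ, k-q ≤ m → m ≤ k-1 → ¬ P m := by
    intro m hm1' hm2' hPm
    have := hun₀ m ⟨(W1 m).mpr ⟨by omega, by omega⟩, hPm⟩
    omega
  -- window jj - 1 : left endpoint k-q, size q
  have hv2 : c₀ ≤ t + ((k - q : ℤ):ℝ)*b - ((jj-1 : ℤ):ℝ)*a := by push_cast; linarith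
  have hv2' : t + ((k - q : ℤ):ℝ)*b - ((jj-1 : ℤ):ℝ)*a < b := by push_cast; linarith
  have W2 := fun m => win_shape_q a b c c₀ t q hb hc hc₀ hc₀b (j := jj-1) (k := k-q) hv2 hv2' m
  obtain ⟨m₁, ⟨hm₁w, hm₁P⟩, _⟩ := hEx (jj-1)
  have hr : k - q ≤ m₁ ∧ m₁ ≤ (k - q) + q - 1 := (W2 m₁).mp hm₁w
  exact hfree m₁ hr.1 (by omega) hm₁P

end Steps

/-! ### Evaluating the maps -/

lemma perSet_Ico_mem (a y l r : ℝ) : y ∈ perSet a (Set.Ico l r) ↔ memI a y l r := by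
  simp [perSet, memI, Set.mem_Ico]

open Classical in
lemma Rmap_eval (a b c c₀ : ℝ) (hq : (⌊c / b⌋ : ℝ) * b = c - c₀) (y : ℝ) :
    Rmap a b c y = if memI a y 0 (c₀+a-b) then y + (c - c₀) + b
      else if memI a y (c₀+a-b) c₀ then y else y + (c - c₀) := by
  classical
  have e : c - (⌊c / b⌋ : ℝ) * b = c₀ := by linarith
  unfold Rmap
  rw [e, hq]
  simp only [perSet_Ico_mem]

open Classical in
lemma Rtil_eval (a b c c₀ : ℝ) (hq : (⌊c / b⌋ : ℝ) * b = c - c₀) (y : ℝ) :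
    Rtil a b c y = if memI a y (c-a) (c-c₀) then y - (c - c₀)
      else if memI a y (c-c₀) (c+b-c₀-a) then y else y - (c - c₀) - b := by
  classical
  have e : c - (⌊c / b⌋ : ℝ) * b = c₀ := by linarith
  unfold Rtil
  rw [e, hq]
  simp only [perSet_Ico_mem]

/-! ### Trichotomies and conversions -/

lemma tri1 (a b c₀ y : ℝ) (ha : 0 < a) (hab : a < b) (h1 : b - a < c₀) (h2 : c₀ < a) :
    memI a y 0 (c₀+a-b) ∨ memI a y (c₀+a-b) c₀ ∨ memI a y c₀ a := by
  have h := memI_cover a ha (L := 0) (m₁ := c₀+a-b) (m₂ := c₀) (by linarith) (by linarith)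
    (by linarith) y
  rcases h with h | h | h
  · exact Or.inl h
  · exact Or.inr (Or.inl h)
  · right; right; rw [show (0:ℝ) + a = a by ring] at h; exact h

lemma tri2 (a b c c₀ y : ℝ) (ha : 0 < a) (hab : a < b) (h1 : b - a < c₀) (h2 : c₀ < a) :
    memI a y (c-a) (c-c₀) ∨ memI a y (c-c₀) (c+b-c₀-a) ∨ memI a y (c+b-c₀-a) c := by
  have h := memI_cover a ha (L := c-a) (m₁ := c-c₀) (m₂ := c+b-c₀-a) (by linarith) (by linarith)
    (by linarith) y
  rcases h with h | h | h
  · exact Or.inl h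
  · exact Or.inr (Or.inl h)
  · right; right; rw [show c - a + a = c by ring] at h; exact h

lemma T1_iff (a b c c₀ y : ℝ) (q : ℤ) (hqb : (q:ℝ)*b = c - c₀) :
    memI a y (c-a) (c-c₀) ↔ memI a (y - (q:ℝ)*b) c₀ a := by
  constructor <;> rintro ⟨k, hk1, hk2⟩
  · exact ⟨k - 1, by push_cast; linarith, by push_cast; linarith⟩
  · exact ⟨k + 1, by push_cast at hk1 hk2 ⊢ <;> linarith, by push_cast at hk1 hk2 ⊢; linarith⟩

lemma T3_iff (a b c c₀ y : ℝ) (q : ℤ) (hqb : (q:ℝ)*b = c - c₀) :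
    memI a y (c+b-c₀-a) c ↔ memI a (y - (q:ℝ)*b - b) 0 (c₀+a-b) := by
  constructor <;> rintro ⟨k, hk1, hk2⟩
  · exact ⟨k - 1, by push_cast; linarith, by push_cast; linarith⟩
  · exact ⟨k + 1, by push_cast at hk1 hk2 ⊢; linarith, by push_cast at hk1 hk2 ⊢; linarith⟩

/-! ### Orbits stay on selected points (⇒ direction) -/

section Orbit

variable (a b c c₀ t : ℝ) (q : ℤ) (P : ℤ → Prop)

variable (ha : 0 < a) (hab : a < b) (h1 : b - a < c₀) (h2 : c₀ < a)
  (hq1 : 1 ≤ q) (hc : c = q*b + c₀) (hfq : (⌊c / b⌋ : ℤ) = q)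
  (hEx : ∀ j : ℤ, ∃! m : ℤ,
    (0 ≤ t - (j:ℝ)*a + (m:ℝ)*b ∧ t - (j:ℝ)*a + (m:ℝ)*b < c) ∧ P m)

include ha hab h1 h2 hq1 hc hfq hEx

lemma orbitR (hP0 : P 0) :
    ∀ n : ℕ, ∃ k : ℤ, P k ∧ (Rmap a b c)^[n] t = t + (k:ℝ)*b := by
  have hb : 0 < b := ha.trans hab
  have hqb : (⌊c / b⌋ : ℝ) * b = c - c₀ := by
    rw [show ((⌊c / b⌋ : ℤ) : ℝ) = (q:ℝ) from by exact_mod_cast hfq]; linarith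
  intro n
  induction n with
  | zero => exact ⟨0, hP0, by norm_num⟩
  | succ n ih =>
    obtain ⟨k, hPk, heq⟩ := ih
    rw [Function.iterate_succ_apply', heq, Rmap_eval a b c c₀ hqb]
    rcases tri1 a b c₀ (t + (k:ℝ)*b) ha hab h1 h2 with hB | hH | hA
    · refine ⟨k + q + 1, stepB a b c c₀ t q P ha hab h1 h2 hq1 hc hEx hPk hB, ?_⟩
      rw [if_pos hB]; push_cast; linarith
    · exact absurd hH (noH1 a b c c₀ t q P ha hab h1 h2 hq1 hc hEx hPk)
    · have hnB : ¬ memI a (t + (k:ℝ)*b) 0 (c₀+a-b) := fun hB =>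
        memI_disj a ha (le_refl 0) (by linarith) (by linarith) hB hA
      have hnH : ¬ memI a (t + (k:ℝ)*b) (c₀+a-b) c₀ :=
        noH1 a b c c₀ t q P ha hab h1 h2 hq1 hc hEx hPk
      refine ⟨k + q, stepA a b c c₀ t q P ha hab h1 h2 hq1 hc hEx hPk hA, ?_⟩
      rw [if_neg hnB, if_neg hnH]; push_cast; linarith

lemma orbitRt (hP0 : P 0) :
    ∀ n : ℕ, ∃ k : ℤ, P k ∧ (Rtil a b c)^[n] t = t + (k:ℝ)*b := by
  have hb : 0 < b := ha.trans hab
  have hqb' : ((q:ℝ)) * b = c - c₀ := by linarith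
  have hqb : (⌊c / b⌋ : ℝ) * b = c - c₀ := by
    rw [show ((⌊c / b⌋ : ℤ) : ℝ) = (q:ℝ) from by exact_mod_cast hfq]; linarith
  intro n
  induction n with
  | zero => exact ⟨0, hP0, by norm_num⟩
  | succ n ih =>
    obtain ⟨k, hPk, heq⟩ := ih
    rw [Function.iterate_succ_apply', heq, Rtil_eval a b c c₀ hqb]
    rcases tri2 a b c c₀ (t + (k:ℝ)*b) ha hab h1 h2 with hT1 | hH | hT3
    · have hmem : memI a (t + ((k:ℝ) - (q:ℝ))*b) c₀ a := by
        have := (T1_iff a b c c₀ (t + (k:ℝ)*b) q hqb').mp hT1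
        have e : t + (k:ℝ)*b - (q:ℝ)*b = t + ((k:ℝ) - (q:ℝ))*b := by ring
        rwa [e] at this
      refine ⟨k - q, backA a b c c₀ t q P ha hab h1 h2 hq1 hc hEx hPk hmem, ?_⟩
      rw [if_pos hT1]; push_cast; linarith
    · exact absurd hH (noH2 a b c c₀ t q P ha hab h1 h2 hq1 hc hEx hPk)
    · have hnT1 : ¬ memI a (t + (k:ℝ)*b) (c-a) (c-c₀) := fun hT1 =>
        memI_disj a ha (le_refl (c-a)) (by linarith) (by linarith) hT1 hT3
      have hnH : ¬ memI a (t + (k:ℝ)*b) (c-c₀) (c+b-c₀-a) :=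
        noH2 a b c c₀ t q P ha hab h1 h2 hq1 hc hEx hPk
      have hmem : memI a (t + ((k:ℝ) - (q:ℝ) - 1)*b) 0 (c₀+a-b) := by
        have := (T3_iff a b c c₀ (t + (k:ℝ)*b) q hqb').mp hT3
        have e : t + (k:ℝ)*b - (q:ℝ)*b - b = t + ((k:ℝ) - (q:ℝ) - 1)*b := by ring
        rwa [e] at this
      refine ⟨k - q - 1, backB a b c c₀ t q P ha hab h1 h2 hq1 hc hEx hPk hmem, ?_⟩
      rw [if_neg hnT1, if_neg hnH]; push_cast; linarith

end Orbit

/-! ### The forward and backward selected-point sequences (⇐ direction) -/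

open Classical in
noncomputable def fwdP (a b c t : ℝ) : ℕ → ℤ
  | 0 => 0
  | n+1 => fwdP a b c t n +
      (if (Rmap a b c)^[n] t ∈ perSet a (Set.Ico 0 ((c - (⌊c / b⌋ : ℝ) * b) + a - b))
       then ⌊c / b⌋ + 1 else ⌊c / b⌋)

open Classical in
noncomputable def bwdP (a b c t : ℝ) : ℕ → ℤ
  | 0 => 0
  | n+1 => bwdP a b c t n -
      (if (Rtil a b c)^[n] t ∈ perSet a (Set.Ico (c - a) (c - (c - (⌊c / b⌋ : ℝ) * b)))
       then ⌊c / b⌋ else ⌊c / b⌋ + 1)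

open Classical in
noncomputable def zetaP (a b c t : ℝ) (i : ℤ) : ℤ :=
  if 0 ≤ i then fwdP a b c t i.toNat else bwdP a b c t (-i).toNat

section Backward

variable (a b c c₀ t : ℝ) (q : ℤ)

variable (ha : 0 < a) (hab : a < b) (h1 : b - a < c₀) (h2 : c₀ < a)
  (hq1 : 1 ≤ q) (hc : c = q*b + c₀) (hfq : (⌊c / b⌋ : ℤ) = q)

include ha hab h1 h2 hq1 hc hfq

lemma fwd_facts
    (hAv : ∀ n : ℕ, ¬ memI a ((Rmap a b c)^[n] t) (c₀+a-b) c₀) :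
    ∀ n : ℕ, (Rmap a b c)^[n] t = t + ((fwdP a b c t n : ℤ):ℝ)*b ∧
      ((fwdP a b c t (n+1) = fwdP a b c t n + q ∧
          memI a (t + ((fwdP a b c t n : ℤ):ℝ)*b) c₀ a) ∨
       (fwdP a b c t (n+1) = fwdP a b c t n + q + 1 ∧
          memI a (t + ((fwdP a b c t n : ℤ):ℝ)*b) 0 (c₀+a-b))) := by
  classical
  have hb : 0 < b := ha.trans hab
  have hqbZ : ((⌊c / b⌋ : ℤ) : ℝ) = (q:ℝ) := by exact_mod_cast hfq
  have hqb : (⌊c / b⌋ : ℝ) * b = c - c₀ := by rw [hqbZ]; linarith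
  have e : c - (⌊c / b⌋ : ℝ) * b = c₀ := by linarith
  -- step analysis, given the iterate equation at n
  have step : ∀ n : ℕ, (Rmap a b c)^[n] t = t + ((fwdP a b c t n : ℤ):ℝ)*b →
      ((fwdP a b c t (n+1) = fwdP a b c t n + q ∧
          memI a (t + ((fwdP a b c t n : ℤ):ℝ)*b) c₀ a) ∨
       (fwdP a b c t (n+1) = fwdP a b c t n + q + 1 ∧
          memI a (t + ((fwdP a b c t n : ℤ):ℝ)*b) 0 (c₀+a-b))) ∧
      (Rmap a b c)^[n+1] t = t + ((fwdP a b c t (n+1) : ℤ):ℝ)*b := by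
    intro n hn
    have hcond : ((Rmap a b c)^[n] t ∈
        perSet a (Set.Ico 0 ((c - (⌊c / b⌋ : ℝ) * b) + a - b))) ↔
        memI a (t + ((fwdP a b c t n : ℤ):ℝ)*b) 0 (c₀+a-b) := by
      rw [hn, e, perSet_Ico_mem]
    have hsucc : fwdP a b c t (n+1) = fwdP a b c t n +
        (if (Rmap a b c)^[n] t ∈
          perSet a (Set.Ico 0 ((c - (⌊c / b⌋ : ℝ) * b) + a - b))
         then ⌊c / b⌋ + 1 else ⌊c / b⌋) := rfl
    have hit : (Rmap a b c)^[n+1] t = Rmap a b c ((Rmap a b c)^[n] t) :=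
      Function.iterate_succ_apply' _ _ _
    rcases tri1 a b c₀ (t + ((fwdP a b c t n : ℤ):ℝ)*b) ha hab h1 h2 with hB | hH | hA
    · have hcnd : (Rmap a b c)^[n] t ∈
          perSet a (Set.Ico 0 ((c - (⌊c / b⌋ : ℝ) * b) + a - b)) := hcond.mpr hB
      have hval : fwdP a b c t (n+1) = fwdP a b c t n + q + 1 := by
        rw [hsucc, if_pos hcnd, hfq]; ring
      refine ⟨Or.inr ⟨hval, hB⟩, ?_⟩
      rw [hit, hn, Rmap_eval a b c c₀ hqb, if_pos hB, hval]
      push_cast; linarith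
    · exact absurd (hn ▸ hH) (hAv n)
    · have hnB : ¬ memI a (t + ((fwdP a b c t n : ℤ):ℝ)*b) 0 (c₀+a-b) := fun hB =>
        memI_disj a ha (le_refl 0) (by linarith) (by linarith) hB hA
      have hnH : ¬ memI a (t + ((fwdP a b c t n : ℤ):ℝ)*b) (c₀+a-b) c₀ := hn ▸ hAv n
      have hcnd : ¬ ((Rmap a b c)^[n] t ∈
          perSet a (Set.Ico 0 ((c - (⌊c / b⌋ : ℝ) * b) + a - b))) := fun h => hnB (hcond.mp h)
      have hval : fwdP a b c t (n+1) = fwdP a b c t n + q := by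
        rw [hsucc, if_neg hcnd, hfq]
      refine ⟨Or.inl ⟨hval, hA⟩, ?_⟩
      rw [hit, hn, Rmap_eval a b c c₀ hqb, if_neg hnB, if_neg hnH, hval]
      push_cast; linarith
  intro n
  induction n with
  | zero =>
    have h0 : (Rmap a b c)^[0] t = t + ((fwdP a b c t 0 : ℤ):ℝ)*b := by
      simp [fwdP]
    exact ⟨h0, (step 0 h0).1⟩
  | succ n ih =>
    have := (step n ih.1).2
    exact ⟨this, (step (n+1) this).1⟩

lemma bwd_facts
    (hAv : ∀ n : ℕ, ¬ memI a ((Rtil a b c)^[n] t) (c-c₀) (c+b-c₀-a)) :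
    ∀ n : ℕ, (Rtil a b c)^[n] t = t + ((bwdP a b c t n : ℤ):ℝ)*b ∧
      ((bwdP a b c t n = bwdP a b c t (n+1) + q ∧
          memI a (t + ((bwdP a b c t (n+1) : ℤ):ℝ)*b) c₀ a) ∨
       (bwdP a b c t n = bwdP a b c t (n+1) + q + 1 ∧
          memI a (t + ((bwdP a b c t (n+1) : ℤ):ℝ)*b) 0 (c₀+a-b))) := by
  classical
  have hb : 0 < b := ha.trans hab
  have hqbZ : ((⌊c / b⌋ : ℤ) : ℝ) = (q:ℝ) := by exact_mod_cast hfq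
  have hqb : (⌊c / b⌋ : ℝ) * b = c - c₀ := by rw [hqbZ]; linarith
  have hqb' : ((q:ℝ)) * b = c - c₀ := by linarith
  have e : c - (c - (⌊c / b⌋ : ℝ) * b) = c - c₀ := by linarith
  have step : ∀ n : ℕ, (Rtil a b c)^[n] t = t + ((bwdP a b c t n : ℤ):ℝ)*b →
      ((bwdP a b c t n = bwdP a b c t (n+1) + q ∧
          memI a (t + ((bwdP a b c t (n+1) : ℤ):ℝ)*b) c₀ a) ∨
       (bwdP a b c t n = bwdP a b c t (n+1) + q + 1 ∧
          memI a (t + ((bwdP a b c t (n+1) : ℤ):ℝ)*b) 0 (c₀+a-b))) ∧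
      (Rtil a b c)^[n+1] t = t + ((bwdP a b c t (n+1) : ℤ):ℝ)*b := by
    intro n hn
    have hcond : ((Rtil a b c)^[n] t ∈
        perSet a (Set.Ico (c - a) (c - (c - (⌊c / b⌋ : ℝ) * b)))) ↔
        memI a (t + ((bwdP a b c t n : ℤ):ℝ)*b) (c-a) (c-c₀) := by
      rw [hn, e, perSet_Ico_mem]
    have hsucc : bwdP a b c t (n+1) = bwdP a b c t n -
        (if (Rtil a b c)^[n] t ∈
          perSet a (Set.Ico (c - a) (c - (c - (⌊c / b⌋ : ℝ) * b)))
         then ⌊c / b⌋ else ⌊c / b⌋ + 1) := rfl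
    have hit : (Rtil a b c)^[n+1] t = Rtil a b c ((Rtil a b c)^[n] t) :=
      Function.iterate_succ_apply' _ _ _
    rcases tri2 a b c c₀ (t + ((bwdP a b c t n : ℤ):ℝ)*b) ha hab h1 h2 with hT1 | hH | hT3
    · have hcnd := hcond.mpr hT1
      have hval : bwdP a b c t (n+1) = bwdP a b c t n - q := by
        rw [hsucc, if_pos hcnd, hfq]
      have hmem : memI a (t + ((bwdP a b c t (n+1) : ℤ):ℝ)*b) c₀ a := by
        have := (T1_iff a b c c₀ (t + ((bwdP a b c t n : ℤ):ℝ)*b) q hqb').mp hT1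
        have e2 : t + ((bwdP a b c t n : ℤ):ℝ)*b - (q:ℝ)*b
            = t + ((bwdP a b c t (n+1) : ℤ):ℝ)*b := by rw [hval]; push_cast; ring
        rwa [e2] at this
      refine ⟨Or.inl ⟨by omega, hmem⟩, ?_⟩
      rw [hit, hn, Rtil_eval a b c c₀ hqb, if_pos hT1, hval]
      push_cast; linarith
    · exact absurd (hn ▸ hH) (hAv n)
    · have hnT1 : ¬ memI a (t + ((bwdP a b c t n : ℤ):ℝ)*b) (c-a) (c-c₀) := fun hT1 =>
        memI_disj a ha (le_refl (c-a)) (by linarith) (by linarith) hT1 hT3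
      have hnH : ¬ memI a (t + ((bwdP a b c t n : ℤ):ℝ)*b) (c-c₀) (c+b-c₀-a) := hn ▸ hAv n
      have hcnd : ¬ ((Rtil a b c)^[n] t ∈
          perSet a (Set.Ico (c - a) (c - (c - (⌊c / b⌋ : ℝ) * b)))) := fun h => hnT1 (hcond.mp h)
      have hval : bwdP a b c t (n+1) = bwdP a b c t n - q - 1 := by
        rw [hsucc, if_neg hcnd, hfq]; ring
      have hmem : memI a (t + ((bwdP a b c t (n+1) : ℤ):ℝ)*b) 0 (c₀+a-b) := by
        have := (T3_iff a b c c₀ (t + ((bwdP a b c t n : ℤ):ℝ)*b) q hqb').mp hT3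
        have e2 : t + ((bwdP a b c t n : ℤ):ℝ)*b - (q:ℝ)*b - b
            = t + ((bwdP a b c t (n+1) : ℤ):ℝ)*b := by rw [hval]; push_cast; ring
        rwa [e2] at this
      refine ⟨Or.inr ⟨by omega, hmem⟩, ?_⟩
      rw [hit, hn, Rtil_eval a b c c₀ hqb, if_neg hnT1, if_neg hnH, hval]
      push_cast; linarith
  intro n
  induction n with
  | zero =>
    have h0 : (Rtil a b c)^[0] t = t + ((bwdP a b c t 0 : ℤ):ℝ)*b := by
      simp [bwdP]
    exact ⟨h0, (step 0 h0).1⟩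
  | succ n ih =>
    have := (step n ih.1).2
    exact ⟨this, (step (n+1) this).1⟩

end Backward

section Zeta

variable (a b c c₀ t : ℝ) (q : ℤ)

variable (ha : 0 < a) (hab : a < b) (h1 : b - a < c₀) (h2 : c₀ < a)
  (hq1 : 1 ≤ q) (hc : c = q*b + c₀) (hfq : (⌊c / b⌋ : ℤ) = q)
  (hAvR : ∀ n : ℕ, ¬ memI a ((Rmap a b c)^[n] t) (c₀+a-b) c₀)
  (hAvT : ∀ n : ℕ, ¬ memI a ((Rtil a b c)^[n] t) (c-c₀) (c+b-c₀-a))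

include ha hab h1 h2 hq1 hc hfq hAvR hAvT

lemma zeta_step : ∀ i : ℤ,
    (zetaP a b c t (i+1) = zetaP a b c t i + q ∧
      memI a (t + ((zetaP a b c t i : ℤ):ℝ)*b) c₀ a) ∨
    (zetaP a b c t (i+1) = zetaP a b c t i + q + 1 ∧
      memI a (t + ((zetaP a b c t i : ℤ):ℝ)*b) 0 (c₀+a-b)) := by
  intro i
  rcases le_or_gt 0 i with hi | hi
  · have e1 : zetaP a b c t i = fwdP a b c t i.toNat := by
      simp [zetaP, hi]
    have e2 : zetaP a b c t (i+1) = fwdP a b c t (i.toNat + 1) := by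
      have : 0 ≤ i + 1 := by omega
      have ht : (i+1).toNat = i.toNat + 1 := by omega
      simp [zetaP, this, ht]
    rw [e1, e2]
    exact (fwd_facts a b c c₀ t q ha hab h1 h2 hq1 hc hfq hAvR i.toNat).2
  · set n : ℕ := (-(i+1)).toNat with hn
    have e1 : zetaP a b c t i = bwdP a b c t (n + 1) := by
      have h0 : ¬ 0 ≤ i := by omega
      have ht : (-i).toNat = n + 1 := by omega
      simp [zetaP, h0, ht]
    have e2 : zetaP a b c t (i+1) = bwdP a b c t n := by
      rcases lt_or_ge (i+1) 0 with h' | h'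
      · have h0 : ¬ 0 ≤ i + 1 := by omega
        simp only [zetaP, if_neg h0]; rfl
      · have hi1 : i + 1 = 0 := by omega
        have hn0 : n = 0 := by omega
        rw [hi1, hn0]
        simp [zetaP, fwdP, bwdP]
    rw [e1, e2]
    have := (bwd_facts a b c c₀ t q ha hab h1 h2 hq1 hc hfq hAvT n).2
    rcases this with ⟨hv, hm⟩ | ⟨hv, hm⟩
    · exact Or.inl ⟨by omega, hm⟩
    · exact Or.inr ⟨by omega, hm⟩

lemma zeta_gap : ∀ i : ℤ, zetaP a b c t i + q ≤ zetaP a b c t (i+1) ∧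
    zetaP a b c t (i+1) ≤ zetaP a b c t i + q + 1 := by
  intro i
  rcases zeta_step a b c c₀ t q ha hab h1 h2 hq1 hc hfq hAvR hAvT i with ⟨hv, _⟩ | ⟨hv, _⟩ <;>
    omega

lemma zeta_bounds : ∀ (n : ℕ) (i : ℤ),
    zetaP a b c t i + q * n ≤ zetaP a b c t (i + n) ∧
    zetaP a b c t (i + n) ≤ zetaP a b c t i + (q+1) * n := by
  intro n
  induction n with
  | zero => intro i; simp
  | succ n ih =>
    intro i
    have h₁ := ih i
    have h₂ := zeta_gap a b c c₀ t q ha hab h1 h2 hq1 hc hfq hAvR hAvT (i + n)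
    have e : i + ((n:ℤ) + 1) = (i + n) + 1 := by ring
    push_cast
    rw [e]
    push_cast at h₁ h₂
    constructor <;> nlinarith [h₁.1, h₁.2, h₂.1, h₂.2]

lemma zeta_bracket : ∀ M : ℤ, ∃ i : ℤ,
    zetaP a b c t i ≤ M ∧ M < zetaP a b c t (i+1) := by
  classical
  intro M
  have hz0 : zetaP a b c t 0 = 0 := by simp [zetaP, fwdP]
  -- find a lower starting point
  set n₀ : ℕ := M.natAbs + 1 with hn₀
  set i₀ : ℤ := -(n₀ : ℤ) with hi₀
  have hlow : zetaP a b c t i₀ ≤ M := by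
    have hb := (zeta_bounds a b c c₀ t q ha hab h1 h2 hq1 hc hfq hAvR hAvT n₀ i₀).1
    have e : i₀ + (n₀:ℤ) = 0 := by omega
    rw [e, hz0] at hb
    have : (q:ℤ) * n₀ ≥ (n₀:ℤ) := by nlinarith [Int.natCast_nonneg n₀]
    omega
  -- Q m : M < zeta (i₀ + m)
  have hQex : ∃ m : ℕ, M < zetaP a b c t (i₀ + m) := by
    refine ⟨(M - zetaP a b c t i₀ + 1).toNat, ?_⟩
    set m₁ : ℕ := (M - zetaP a b c t i₀ + 1).toNat with hm₁
    have hb := (zeta_bounds a b c c₀ t q ha hab h1 h2 hq1 hc hfq hAvR hAvT m₁ i₀).1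
    have h₁ : (m₁ : ℤ) ≥ M - zetaP a b c t i₀ + 1 := Int.self_le_toNat _
    have h₂ : (q:ℤ) * m₁ ≥ (m₁:ℤ) := by nlinarith [Int.natCast_nonneg m₁]
    omega
  have hne : Nat.find hQex ≠ 0 := by
    intro h
    have hspec := Nat.find_spec hQex
    rw [h] at hspec
    simp only [Nat.cast_zero, add_zero] at hspec
    omega
  obtain ⟨m, hm⟩ : ∃ m, Nat.find hQex = m + 1 := ⟨Nat.find hQex - 1, by omega⟩
  refine ⟨i₀ + m, ?_, ?_⟩
  · have hmin := Nat.find_min hQex (m := m) (by omega)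
    exact not_lt.mp hmin
  · have hspec := Nat.find_spec hQex
    rw [hm] at hspec
    push_cast at hspec
    rw [show i₀ + ((m:ℤ) + 1) = (i₀ + m) + 1 from by ring] at hspec
    exact hspec

end Zeta

section Count

variable (a b c c₀ t : ℝ) (q : ℤ)

variable (ha : 0 < a) (hab : a < b) (h1 : b - a < c₀) (h2 : c₀ < a)
  (hq1 : 1 ≤ q) (hc : c = q*b + c₀) (hfq : (⌊c / b⌋ : ℤ) = q)
  (hAvR : ∀ n : ℕ, ¬ memI a ((Rmap a b c)^[n] t) (c₀+a-b) c₀)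
  (hAvT : ∀ n : ℕ, ¬ memI a ((Rtil a b c)^[n] t) (c-c₀) (c+b-c₀-a))

include ha hab h1 h2 hq1 hc hfq hAvR hAvT

lemma zeta_mono_le {i i' : ℤ} (hii : i ≤ i') :
    zetaP a b c t i + q * (i' - i) ≤ zetaP a b c t i' := by
  have hb := (zeta_bounds a b c c₀ t q ha hab h1 h2 hq1 hc hfq hAvR hAvT (i' - i).toNat i).1
  have e : i + ((i' - i).toNat : ℤ) = i' := by omega
  have e2 : ((i' - i).toNat : ℤ) = i' - i := by omega
  rw [e, e2] at hb
  exact hb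

lemma count (j : ℤ) : ∃! m : ℤ,
    (0 ≤ t - (j:ℝ)*a + (m:ℝ)*b ∧ t - (j:ℝ)*a + (m:ℝ)*b < c) ∧
    ∃ i : ℤ, zetaP a b c t i = m := by
  have hb : 0 < b := ha.trans hab
  have hc₀ : 0 < c₀ := by linarith
  have hc₀b : c₀ < b := by linarith
  obtain ⟨k₀, hu1, hu2⟩ : ∃ k₀ : ℤ,
      0 ≤ t + (k₀:ℝ)*b - (j:ℝ)*a ∧ t + (k₀:ℝ)*b - (j:ℝ)*a < b := by
    obtain ⟨kk, hk1, hk2⟩ := memI_exists b hb 0 (t - (j:ℝ)*a)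
    exact ⟨-kk, by push_cast; linarith, by push_cast; linarith⟩
  have hZG := fun i => zeta_gap a b c c₀ t q ha hab h1 h2 hq1 hc hfq hAvR hAvT i
  have hZS := fun i => zeta_step a b c c₀ t q ha hab h1 h2 hq1 hc hfq hAvR hAvT i
  have hML := fun {i i'} (h : i ≤ i') =>
    zeta_mono_le a b c c₀ t q ha hab h1 h2 hq1 hc hfq hAvR hAvT (i := i) (i' := i') h
  rcases lt_or_ge (t + (k₀:ℝ)*b - (j:ℝ)*a) c₀ with hcase | hcase
  · -- size q+1 window [k₀, k₀+q]
    have W := fun m => win_shape_q1 a b c c₀ t q hb hc hc₀.le hc₀b (j := j) (k := k₀) hu1 hcase m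
    have humem : memI a (t + (k₀:ℝ)*b) 0 c₀ := ⟨j, hu1, hcase⟩
    obtain ⟨i, hi1, hi2⟩ := zeta_bracket a b c c₀ t q ha hab h1 h2 hq1 hc hfq hAvR hAvT (k₀ + q)
    have hgap := hZG i
    have hzilo : k₀ ≤ zetaP a b c t i := by omega
    refine ⟨zetaP a b c t i, ⟨(W _).mpr ⟨hzilo, hi1⟩, ⟨i, rfl⟩⟩, ?_⟩
    rintro m' ⟨hw', ⟨i', rfl⟩⟩
    have hm' := (W _).mp hw'
    have hile : i' ≤ i := by
      by_contra hgt
      push_neg at hgt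
      have := hML (show i + 1 ≤ i' by omega)
      have hq0 : 0 ≤ q * (i' - (i+1)) := mul_nonneg (by omega) (by omega)
      omega
    have hige : i ≤ i' := by
      by_contra hgt
      push_neg at hgt
      rcases eq_or_lt_of_le (show i' + 1 ≤ i from by omega) with heq | hlt
      · rcases hZS i' with ⟨hv, hmem⟩ | ⟨hv, hmem⟩
        · -- gap q : zeta i' must be k₀, contradiction with u ∈ [0,c₀)
          have hz : zetaP a b c t i' = k₀ := by
            have : zetaP a b c t (i'+1) = zetaP a b c t i := by rw [heq]
            omega
          have e : ((zetaP a b c t i' : ℤ):ℝ) = (k₀:ℝ) := by exact_mod_cast hz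
          rw [e] at hmem
          exact absurd hmem (fun hm =>
            memI_disj a ha (le_refl 0) (le_refl c₀) (by linarith) humem hm)
        · have : zetaP a b c t (i'+1) = zetaP a b c t i := by rw [heq]
          omega
      · have := hML (show i' ≤ i by omega)
        have hq2 : 2 * q ≤ q * (i - i') := by nlinarith
        omega
    have : i' = i := le_antisymm hile hige
    rw [this]
  · -- size q window [k₀, k₀+q-1]
    have W := fun m => win_shape_q a b c c₀ t q hb hc hc₀ hc₀b (j := j) (k := k₀) hcase hu2 m
    -- helper : no point at k₀ - 1 with a (q+1)-gap starting there
    have hnoB : ¬ memI a (t + ((k₀ - 1 : ℤ):ℝ)*b) 0 (c₀+a-b) := by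
      rintro ⟨kk', hw1, hw2⟩
      have memW : memI a (t + (k₀:ℝ)*b) (b-a) c₀ :=
        ⟨kk'+1, by push_cast at hw1 ⊢; linarith, by push_cast at hw2 ⊢; linarith⟩
      rcases lt_or_ge (t + (k₀:ℝ)*b - (j:ℝ)*a) a with hua | hua
      · have memA : memI a (t + (k₀:ℝ)*b) c₀ a := ⟨j, hcase, hua⟩
        exact memI_disj a ha (show (0:ℝ) ≤ b - a by linarith) (le_refl c₀)
          (by linarith) memW memA
      · have mem0 : memI a (t + (k₀:ℝ)*b) 0 (b-a) :=
          ⟨j+1, by push_cast; linarith, by push_cast; linarith⟩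
        exact memI_disj a ha (le_refl 0) (le_refl (b-a))
          (by linarith : c₀ ≤ 0 + a) mem0 memW
    obtain ⟨i, hi1, hi2⟩ :=
      zeta_bracket a b c c₀ t q ha hab h1 h2 hq1 hc hfq hAvR hAvT (k₀ + q - 1)
    have hzilo : k₀ ≤ zetaP a b c t i := by
      by_contra hlt
      push_neg at hlt
      rcases hZS i with ⟨hv, _⟩ | ⟨hv, hmem⟩
      · omega
      · have hz : zetaP a b c t i = k₀ - 1 := by omega
        have e : ((zetaP a b c t i : ℤ):ℝ) = ((k₀ - 1 : ℤ):ℝ) := by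
          exact_mod_cast hz
        rw [e] at hmem
        exact hnoB hmem
    refine ⟨zetaP a b c t i, ⟨(W _).mpr ⟨hzilo, hi1⟩, ⟨i, rfl⟩⟩, ?_⟩
    rintro m' ⟨hw', ⟨i', rfl⟩⟩
    have hm' := (W _).mp hw'
    have hile : i' ≤ i := by
      by_contra hgt
      push_neg at hgt
      have := hML (show i + 1 ≤ i' by omega)
      have hq0 : 0 ≤ q * (i' - (i+1)) := mul_nonneg (by omega) (by omega)
      omega
    have hige : i ≤ i' := by
      by_contra hgt
      push_neg at hgt
      have := hML (show i' ≤ i by omega)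
      have hq2 : q * 1 ≤ q * (i - i') :=
        mul_le_mul_of_nonneg_left (by omega) (by omega)
      omega
    have : i' = i := le_antisymm hile hige
    rw [this]

end Count

/-- Proposition `dabc1pointcharacterization`: with `c₀ = c − ⌊c/b⌋·b` and `b − a < c₀ < a`,
`t ∈ S_{a,b,c}` iff no iterate `(R_{a,b,c})ⁿ(t)` or `(R̃_{a,b,c})ⁿ(t)` (`n ≥ 0`) belongs to
the union of the black holes `[c₀+a−b, c₀) + aℤ` and `[c−c₀, c+b−c₀−a) + aℤ`. -/
theorem mem_S_iff_orbits_avoid_blackholes (a b c c₀ : ℝ)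
    (ha : 0 < a) (hab : a < b) (hbc : b < c)
    (hc0 : c₀ = c - (⌊c / b⌋ : ℝ) * b) (h1 : b - a < c₀) (h2 : c₀ < a) :
    ∀ t : ℝ, t ∈ Sset a b c ↔
      ∀ n : ℕ,
        (Rmap a b c)^[n] t ∉
          perSet a (Set.Ico (c₀ + a - b) c₀) ∪ perSet a (Set.Ico (c - c₀) (c + b - c₀ - a)) ∧
        (Rtil a b c)^[n] t ∉
          perSet a (Set.Ico (c₀ + a - b) c₀) ∪ perSet a (Set.Ico (c - c₀) (c + b - c₀ - a)) := by
  intro t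
  have hb : 0 < b := ha.trans hab
  have hq1 : 1 ≤ (⌊c / b⌋ : ℤ) := by
    rw [Int.le_floor]
    rw [show ((1:ℤ):ℝ) = 1 from by norm_num]
    rw [le_div_iff₀ hb]
    linarith
  have hc' : c = ((⌊c / b⌋ : ℤ):ℝ)*b + c₀ := by rw [hc0]; ring
  constructor
  · rintro ⟨x, hx, hx0, hrow⟩ n
    have hEx : ∀ jj : ℤ, ∃! m : ℤ,
        (0 ≤ t - (jj:ℝ)*a + (m:ℝ)*b ∧ t - (jj:ℝ)*a + (m:ℝ)*b < c) ∧ x m = 1 :=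
      fun jj => (mrow_one_iff a b c t hb x hx jj).mp (hrow jj)
    obtain ⟨k, hPk, heq⟩ := orbitR a b c c₀ t ⌊c / b⌋ (fun k => x k = 1)
      ha hab h1 h2 hq1 hc' rfl hEx hx0 n
    obtain ⟨k', hPk', heq'⟩ := orbitRt a b c c₀ t ⌊c / b⌋ (fun k => x k = 1)
      ha hab h1 h2 hq1 hc' rfl hEx hx0 n
    constructor
    · rw [heq]
      intro hmem
      rcases hmem with hmem | hmem
      · exact noH1 a b c c₀ t ⌊c / b⌋ (fun k => x k = 1) ha hab h1 h2 hq1 hc' hEx hPk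
          ((perSet_Ico_mem a _ _ _).mp hmem)
      · exact noH2 a b c c₀ t ⌊c / b⌋ (fun k => x k = 1) ha hab h1 h2 hq1 hc' hEx hPk
          ((perSet_Ico_mem a _ _ _).mp hmem)
    · rw [heq']
      intro hmem
      rcases hmem with hmem | hmem
      · exact noH1 a b c c₀ t ⌊c / b⌋ (fun k => x k = 1) ha hab h1 h2 hq1 hc' hEx hPk'
          ((perSet_Ico_mem a _ _ _).mp hmem)
      · exact noH2 a b c c₀ t ⌊c / b⌋ (fun k => x k = 1) ha hab h1 h2 hq1 hc' hEx hPk'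
          ((perSet_Ico_mem a _ _ _).mp hmem)
  · intro hAvoid
    classical
    have hAvR : ∀ n : ℕ, ¬ memI a ((Rmap a b c)^[n] t) (c₀+a-b) c₀ := fun n hm =>
      (hAvoid n).1 (Set.mem_union_left _ ((perSet_Ico_mem a _ _ _).mpr hm))
    have hAvT : ∀ n : ℕ, ¬ memI a ((Rtil a b c)^[n] t) (c-c₀) (c+b-c₀-a) := fun n hm =>
      (hAvoid n).2 (Set.mem_union_right _ ((perSet_Ico_mem a _ _ _).mpr hm))
    set x : ℤ → ℝ := fun k => if ∃ i : ℤ, zetaP a b c t i = k then (1:ℝ) else 0 with hxdef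
    have hxbin : ∀ k, x k = 0 ∨ x k = 1 := by
      intro k
      by_cases h : ∃ i : ℤ, zetaP a b c t i = k
      · right; rw [hxdef]; simp only [if_pos h]
      · left; rw [hxdef]; simp only [if_neg h]
    have hxval : ∀ k, (x k = 1 ↔ ∃ i : ℤ, zetaP a b c t i = k) := by
      intro k
      by_cases h : ∃ i : ℤ, zetaP a b c t i = k
      · simp only [hxdef, if_pos h]
        simpa using h
      · simp only [hxdef, if_neg h]
        constructor
        · intro h0; exact absurd h0.symm one_ne_zero
        · intro hh; exact absurd hh h
    refine ⟨x, hxbin, ?_, ?_⟩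
    · exact (hxval 0).mpr ⟨0, by simp [zetaP, fwdP]⟩
    · intro jj
      rw [mrow_one_iff a b c t hb x hxbin jj]
      obtain ⟨m, ⟨hw, hex⟩, hun⟩ := count a b c c₀ t ⌊c / b⌋
        ha hab h1 h2 hq1 hc' rfl hAvR hAvT jj
      refine ⟨m, ⟨hw, (hxval m).mpr hex⟩, ?_⟩
      rintro y ⟨hwy, hxy⟩
      exact hun y ⟨hwy, (hxval y).mp hxy⟩
end
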